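/- arXiv:2601.06534 — 7 statements merged into one kernel-verified Lean document; each statement's English description precedes it below -/
import Mathlib

section
/- If (T(t,τ))_{t≥τ} is an evolutionary family and x : ℝ → X satisfies both x(t) = T(t,τ)x(τ) + ∫_τ^t T(t,s)y₁(s) ds and x(t) = T(t,τ)x(τ) + ∫_τ^t T(t,s)y₂(s) ds for all t ≥ τ, where y₁, y₂ are locally integrable, then y₁(t) = y₂(t) for almost every t ∈ ℝ. -/
open MeasureTheory Set Filter Metric Topology

/-- Auxiliary: a strongly continuous family applied to a measurable function is
a.e. strongly measurable on a set. -/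
lemma aestronglyMeasurable_apply_family
    {X : Type*} [NormedAddCommGroup X] [NormedSpace ℝ X]
    (L : ℝ → X →L[ℝ] X) (S : Set ℝ) (hS : MeasurableSet S)
    (hLc : ∀ c : X, AEStronglyMeasurable (fun s => L s c) ((volume : Measure ℝ).restrict S))
    (z : ℝ → X) (hz : AEStronglyMeasurable z ((volume : Measure ℝ).restrict S)) :
    AEStronglyMeasurable (fun s => L s (z s)) ((volume : Measure ℝ).restrict S) := by
  obtain ⟨g, hg, hzg⟩ := hz
  have hsimp : ∀ f : SimpleFunc ℝ X,
      AEStronglyMeasurable (fun s => L s (f s)) ((volume : Measure ℝ).restrict S) := by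
    intro f
    induction f using SimpleFunc.induction with
    | @const c s hs =>
        have heq : (fun x => L x ((SimpleFunc.piecewise s hs (SimpleFunc.const ℝ c)
            (SimpleFunc.const ℝ 0)) x)) = fun x => Set.indicator s (fun x => L x c) x := by
          ext x
          by_cases hx : x ∈ s <;>
            simp [SimpleFunc.piecewise_apply, hx, Set.indicator_of_mem, Set.indicator_of_notMem]
        rw [heq]
        exact (hLc c).indicator hs
    | @add f g' hfg hf hg' =>
        have heq : (fun x => L x ((f + g') x)) = fun x => L x (f x) + L x (g' x) := by
          ext x; simp [map_add]
        rw [heq]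
        exact hf.add hg'
  have hlim : ∀ᵐ s ∂((volume : Measure ℝ).restrict S),
      Tendsto (fun n => L s (hg.approx n s)) atTop (𝓝 (L s (z s))) := by
    filter_upwards [hzg] with s hs
    rw [hs]
    exact ((L s).continuous.tendsto _).comp (hg.tendsto_approx s)
  exact aestronglyMeasurable_of_tendsto_ae atTop (fun n => hsimp _) hlim

/-- If an evolutionary family `(T t τ)_{t ≥ τ}` and a function `x` satisfy
the integral equation simultaneously with two locally integrable inhomogeneities `y₁` and
`y₂`, then `y₁ = y₂` almost everywhere. -/
theorem inhomogeneity_ae_unique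
    {X : Type*} [NormedAddCommGroup X] [NormedSpace ℝ X] [CompleteSpace X]
    (T : ℝ → ℝ → X →L[ℝ] X)
    (hId : ∀ t, T t t = ContinuousLinearMap.id ℝ X)
    (hCoc : ∀ τ s t, τ ≤ s → s ≤ t → ∀ u, T t s (T s τ u) = T t τ u)
    (hCont : ∀ τ (u : X), ContinuousOn (fun t => T t τ u) (Ici τ))
    (hContB : ∀ τ (u : X), ContinuousOn (fun s => T τ s u) (Iic τ))
    (x y₁ y₂ : ℝ → X)
    (hy₁ : LocallyIntegrable y₁ volume)
    (hy₂ : LocallyIntegrable y₂ volume)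
    (hx₁ : ∀ τ t, τ ≤ t → x t = T t τ (x τ) + ∫ s in Ioc τ t, T t s (y₁ s))
    (hx₂ : ∀ τ t, τ ≤ t → x t = T t τ (x τ) + ∫ s in Ioc τ t, T t s (y₂ s)) :
    ∀ᵐ t ∂(volume : Measure ℝ), y₁ t = y₂ t := by
  set y : ℝ → X := fun s => y₁ s - y₂ s with hy_def
  have hy : LocallyIntegrable y volume := hy₁.sub hy₂
  -- uniform bound on the operators via Banach–Steinhaus
  have hbound : ∀ a b : ℝ, a ≤ b → ∃ M : ℝ, 0 ≤ M ∧ ∀ s ∈ Icc a b, ‖T b s‖ ≤ M := by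
    intro a b hab
    have h := banach_steinhaus (ι := Icc a b) (g := fun s : Icc a b => T b s) ?_
    · obtain ⟨M, hM⟩ := h
      exact ⟨max M 0, le_max_right _ _, fun s hs => le_trans (hM ⟨s, hs⟩) (le_max_left _ _)⟩
    · intro u
      have hc : ContinuousOn (fun s => ‖T b s u‖) (Icc a b) :=
        ((hContB b u).mono Icc_subset_Iic_self).norm
      obtain ⟨C, hC⟩ := isCompact_Icc.exists_bound_of_continuousOn
        ((hContB b u).mono Icc_subset_Iic_self)
      exact ⟨C, fun i => hC i i.2⟩
  -- measurability
  have hmeasZ : ∀ (z : ℝ → X) (a b : ℝ),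
      AEStronglyMeasurable z ((volume : Measure ℝ).restrict (Ioc a b)) →
      AEStronglyMeasurable (fun s => T b s (z s)) ((volume : Measure ℝ).restrict (Ioc a b)) := by
    intro z a b hz
    refine aestronglyMeasurable_apply_family (fun s => T b s) (Ioc a b) measurableSet_Ioc
      (fun c => ?_) z hz
    exact ((hContB b c).mono Ioc_subset_Iic_self).aestronglyMeasurable measurableSet_Ioc
  -- integrability
  have hInt : ∀ (z : ℝ → X), LocallyIntegrable z volume → ∀ a b : ℝ, a ≤ b →
      IntegrableOn (fun s => T b s (z s)) (Ioc a b) volume := by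
    intro z hz a b hab
    obtain ⟨M, hM0, hM⟩ := hbound a b hab
    have hzi : IntegrableOn z (Ioc a b) volume :=
      (hz.integrableOn_isCompact isCompact_Icc).mono_set Ioc_subset_Icc_self
    refine Integrable.mono' (hzi.norm.const_mul M) (hmeasZ z a b hzi.aestronglyMeasurable) ?_
    filter_upwards [ae_restrict_mem measurableSet_Ioc] with s hs
    calc ‖T b s (z s)‖ ≤ ‖T b s‖ * ‖z s‖ := (T b s).le_opNorm _
      _ ≤ M * ‖z s‖ :=
        mul_le_mul_of_nonneg_right (hM s ⟨hs.1.le, hs.2⟩) (norm_nonneg _)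
  -- the key cancellation
  have hzero : ∀ a b : ℝ, a ≤ b → (∫ s in Ioc a b, T b s (y s)) = 0 := by
    intro a b hab
    have he : (∫ s in Ioc a b, T b s (y₁ s)) = ∫ s in Ioc a b, T b s (y₂ s) :=
      add_left_cancel ((hx₁ a b hab).symm.trans (hx₂ a b hab))
    have h1 : IntegrableOn (fun s => T b s (y₁ s)) (Ioc a b) volume := hInt y₁ hy₁ a b hab
    have h2 : IntegrableOn (fun s => T b s (y₂ s)) (Ioc a b) volume := hInt y₂ hy₂ a b hab
    have : (fun s => T b s (y s)) = fun s => T b s (y₁ s) - T b s (y₂ s) := by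
      ext s; simp [hy_def, map_sub]
    rw [this, integral_sub h1 h2, sub_eq_zero]
    exact he
  -- Lebesgue differentiation
  have hLeb := (Besicovitch.vitaliFamily (volume : Measure ℝ)).ae_tendsto_average_norm_sub hy
  filter_upwards [hLeb] with t ht
  have hA : Tendsto (fun r => ⨍ s in closedBall t r, ‖y s - y t‖) (𝓝[>] (0:ℝ)) (𝓝 0) :=
    ht.comp (Besicovitch.tendsto_filterAt volume t)
  -- the function whose limit we compute in two ways
  set H : ℝ → X := fun r => r⁻¹ • ∫ s in Ioc (t - r) t, (T t s (y t) - T t s (y s)) with hH_def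
  obtain ⟨M, hM0, hM⟩ := hbound (t - 1) t (by linarith)
  -- measure facts
  have hvol : ∀ r : ℝ, 0 ≤ r → ((volume : Measure ℝ) (Ioc (t - r) t)).toReal = r := by
    intro r hr
    rw [Real.volume_Ioc, ENNReal.toReal_ofReal (by linarith)]
    ring
  have hIntConst : ∀ r : ℝ, IntegrableOn (fun s => T t s (y t)) (Ioc (t - r) t) volume := by
    intro r
    have : ContinuousOn (fun s => T t s (y t)) (Icc (t - r) t) :=
      (hContB t (y t)).mono Icc_subset_Iic_self
    exact (this.integrableOn_Icc).mono_set Ioc_subset_Icc_self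
  have hIntY : ∀ r : ℝ, 0 < r → IntegrableOn (fun s => T t s (y s)) (Ioc (t - r) t) volume :=
    fun r hr => hInt y hy (t - r) t (by linarith)
  -- H tends to y t
  have hH1 : Tendsto H (𝓝[>] (0:ℝ)) (𝓝 (y t)) := by
    rw [Metric.tendsto_nhdsWithin_nhds]
    intro ε hε
    have hct : ContinuousWithinAt (fun s => T t s (y t)) (Iic t) t :=
      (hContB t (y t)) t (le_refl t)
    rw [Metric.continuousWithinAt_iff] at hct
    obtain ⟨δ, hδpos, hδ⟩ := hct (ε/2) (by linarith)
    refine ⟨δ, hδpos, ?_⟩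
    intro r hr hrd
    have hr0 : 0 < r := hr
    have hrδ : r < δ := by
      have := hrd
      rw [Real.dist_eq, sub_zero, abs_of_pos hr0] at this
      exact this
    -- H r = r⁻¹ • ∫ T t s (y t)  since ∫ T t s (y s) = 0
    have hsplit : H r = r⁻¹ • ∫ s in Ioc (t - r) t, T t s (y t) := by
      simp only [hH_def]
      rw [integral_sub (hIntConst r) (hIntY r hr0), hzero (t - r) t (by linarith), sub_zero]
    have hTtt : T t t (y t) = y t := by rw [hId]; rfl
    have key : ‖H r - y t‖ ≤ ε/2 := by
      have hcongr : H r - y t = r⁻¹ • ∫ s in Ioc (t - r) t, (T t s (y t) - y t) := by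
        rw [hsplit, integral_sub (hIntConst r) (integrableOn_const (by
          rw [Real.volume_Ioc]; exact ENNReal.ofReal_ne_top)),
          setIntegral_const, measureReal_def, hvol r hr0.le, smul_sub, smul_smul,
          inv_mul_cancel₀ (ne_of_gt hr0), one_smul]
      rw [hcongr, norm_smul, norm_inv, Real.norm_of_nonneg hr0.le]
      have hbnd : ‖∫ s in Ioc (t - r) t, (T t s (y t) - y t)‖ ≤ (ε/2) * r := by
        have := norm_setIntegral_le_of_norm_le_const (μ := (volume : Measure ℝ))
          (s := Ioc (t - r) t) (f := fun s => T t s (y t) - y t) (C := ε/2)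
          (by rw [Real.volume_Ioc]; exact ENNReal.ofReal_lt_top) ?_
        · rw [measureReal_def, hvol r hr0.le] at this; linarith [this]
        · intro s hs
          have hsdist : dist s t < δ := by
            rw [Real.dist_eq, abs_of_nonpos (by linarith [hs.2] : s - t ≤ 0)]
            have : t - r < s := hs.1
            linarith
          have h5 := hδ hs.2 hsdist
          rw [hTtt, dist_eq_norm] at h5
          exact h5.le
      calc r⁻¹ * ‖∫ s in Ioc (t - r) t, (T t s (y t) - y t)‖ ≤ r⁻¹ * ((ε/2) * r) := by
            exact mul_le_mul_of_nonneg_left hbnd (inv_nonneg.2 hr0.le)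
        _ = ε/2 := by field_simp
    rw [dist_eq_norm]
    exact lt_of_le_of_lt key (by linarith)
  -- H tends to 0
  have hH2 : Tendsto H (𝓝[>] (0:ℝ)) (𝓝 0) := by
    rw [tendsto_zero_iff_norm_tendsto_zero]
    have hIr : Tendsto (fun r : ℝ => r⁻¹ * ∫ s in Ioc (t - r) t, ‖y s - y t‖)
        (𝓝[>] (0:ℝ)) (𝓝 0) := by
      have h2A : Tendsto (fun r : ℝ => 2 * ⨍ s in closedBall t r, ‖y s - y t‖)
          (𝓝[>] (0:ℝ)) (𝓝 0) := by
        have := hA.const_mul (2:ℝ)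
        simpa using this
      refine squeeze_zero' ?_ ?_ h2A
      · filter_upwards [self_mem_nhdsWithin] with r hr
        have hr0 : (0:ℝ) < r := hr
        exact mul_nonneg (inv_nonneg.2 hr0.le) (integral_nonneg fun s => norm_nonneg _)
      · filter_upwards [self_mem_nhdsWithin] with r hr
        have hr0 : (0:ℝ) < r := hr
        have hball : IntegrableOn (fun s => ‖y s - y t‖) (closedBall t r) volume := by
          refine Integrable.norm ?_
          exact ((hy.integrableOn_isCompact (isCompact_closedBall t r)).sub
            (integrableOn_const (by
              rw [Real.volume_closedBall]; exact ENNReal.ofReal_ne_top)))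
        have hsub : Ioc (t - r) t ⊆ closedBall t r := by
          rw [Real.closedBall_eq_Icc]
          exact fun s hs => ⟨hs.1.le, le_trans hs.2 (by linarith)⟩
        have hmono : (∫ s in Ioc (t - r) t, ‖y s - y t‖) ≤
            ∫ s in closedBall t r, ‖y s - y t‖ := by
          refine setIntegral_mono_set hball ?_ (HasSubset.Subset.eventuallyLE hsub)
          exact Eventually.of_forall fun s => norm_nonneg _
        have havg : ⨍ s in closedBall t r, ‖y s - y t‖ =
            (2*r)⁻¹ * ∫ s in closedBall t r, ‖y s - y t‖ := by
          rw [setAverage_eq, measureReal_def, Real.volume_closedBall,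
            ENNReal.toReal_ofReal (by linarith), smul_eq_mul]
        rw [havg]
        calc r⁻¹ * ∫ s in Ioc (t - r) t, ‖y s - y t‖
            ≤ r⁻¹ * ∫ s in closedBall t r, ‖y s - y t‖ :=
              mul_le_mul_of_nonneg_left hmono (inv_nonneg.2 hr0.le)
          _ = 2 * ((2*r)⁻¹ * ∫ s in closedBall t r, ‖y s - y t‖) := by
              field_simp
    have hIrM : Tendsto (fun r : ℝ => M * (r⁻¹ * ∫ s in Ioc (t - r) t, ‖y s - y t‖))
        (𝓝[>] (0:ℝ)) (𝓝 0) := by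
      have := hIr.const_mul M
      simpa using this
    refine squeeze_zero' ?_ ?_ hIrM
    · exact Eventually.of_forall fun r => norm_nonneg _
    · filter_upwards [Ioo_mem_nhdsGT_of_mem (α := ℝ) ⟨le_refl 0, one_pos⟩] with r hr
      obtain ⟨hr0, hr1⟩ := hr
      have hnorm_int : ‖∫ s in Ioc (t - r) t, (T t s (y t) - T t s (y s))‖ ≤
          ∫ s in Ioc (t - r) t, M * ‖y s - y t‖ := by
        refine norm_integral_le_of_norm_le ?_ ?_
        · exact (((hy.integrableOn_isCompact isCompact_Icc).mono_set
            Ioc_subset_Icc_self).sub (integrableOn_const (by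
              rw [Real.volume_Ioc]; exact ENNReal.ofReal_ne_top))).norm.const_mul M
        · filter_upwards [ae_restrict_mem measurableSet_Ioc] with s hs
          have heq2 : T t s (y t) - T t s (y s) = T t s (y t - y s) :=
            (map_sub (T t s) (y t) (y s)).symm
          rw [heq2]
          calc ‖T t s (y t - y s)‖ ≤ ‖T t s‖ * ‖y t - y s‖ := (T t s).le_opNorm _
            _ ≤ M * ‖y s - y t‖ := by
                rw [norm_sub_rev]
                exact mul_le_mul_of_nonneg_right
                  (hM s ⟨by linarith [hs.1], hs.2⟩) (norm_nonneg _)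
      have : ‖H r‖ = r⁻¹ * ‖∫ s in Ioc (t - r) t, (T t s (y t) - T t s (y s))‖ := by
        rw [hH_def, norm_smul, norm_inv, Real.norm_of_nonneg hr0.le]
      rw [this]
      have hintM : (∫ s in Ioc (t - r) t, M * ‖y s - y t‖) =
          M * ∫ s in Ioc (t - r) t, ‖y s - y t‖ := by
        rw [integral_const_mul]
      calc r⁻¹ * ‖∫ s in Ioc (t - r) t, (T t s (y t) - T t s (y s))‖
          ≤ r⁻¹ * (M * ∫ s in Ioc (t - r) t, ‖y s - y t‖) := by
            rw [← hintM]
            exact mul_le_mul_of_nonneg_left hnorm_int (inv_nonneg.2 hr0.le)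
        _ = M * (r⁻¹ * ∫ s in Ioc (t - r) t, ‖y s - y t‖) := by ring
  have h0 : y t = 0 := tendsto_nhds_unique hH1 hH2
  exact sub_eq_zero.mp h0
end

section
/- Suppose the evolutionary family (T(t,τ))_{t≥τ} admits an exponential dichotomy with respect to the family of norms ‖·‖_t, with projections P(τ), Q(τ)=I−P(τ), and constants a<0<b, D>0. For y ∈ L^q (1≤q≤∞), the function x₁(t) = ∫_{-∞}^t T(t,τ)P(τ)y(τ) dτ is well-defined and satisfies ‖x₁(t)‖_t ≤ (D/(1−e^a))·‖y‖_q for all t ∈ ℝ. -/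
open MeasureTheory Set Filter
open scoped ENNReal

/-- The `L^p`-norm of a function `f : ℝ → X` with respect to a family of norms
`N t = ‖·‖_t` on `X` (ess sup when `p = ∞`). -/
noncomputable def famLpNorm {X : Type*} [NormedAddCommGroup X]
    (N : ℝ → X → ℝ) (p : ℝ≥0∞) (f : ℝ → X) : ℝ≥0∞ :=
  if p = ∞ then essSup (fun t => ENNReal.ofReal (N t (f t))) volume
  else (∫⁻ t, ENNReal.ofReal (N t (f t)) ^ p.toReal) ^ (1 / p.toReal)

/-- Membership in `Y₁ = L^p ∩ C_b` with respect to the family of norms `N`. -/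
def MemY1 {X : Type*} [NormedAddCommGroup X]
    (N : ℝ → X → ℝ) (p : ℝ≥0∞) (x : ℝ → X) : Prop :=
  Continuous x ∧ (∃ M, ∀ t, N t (x t) ≤ M) ∧ famLpNorm N p x < ∞

/-- Membership in `Y₂ = L^q` with respect to the family of norms `N`. -/
def MemY2 {X : Type*} [NormedAddCommGroup X]
    (N : ℝ → X → ℝ) (q : ℝ≥0∞) (y : ℝ → X) : Prop :=
  AEStronglyMeasurable y volume ∧ famLpNorm N q y < ∞

/-- `x` solves the inhomogeneous integral equation
`x t = T t τ (x τ) + ∫_τ^t T t s (y s) ds` associated with the evolutionary family `T`. -/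
def SolvesEq {X : Type*} [NormedAddCommGroup X] [NormedSpace ℝ X]
    (T : ℝ → ℝ → X →L[ℝ] X) (x y : ℝ → X) : Prop :=
  ∀ τ t, τ ≤ t → x t = T t τ (x τ) + ∫ s in Ioc τ t, T t s (y s)

/-- Exponential dichotomy of the evolutionary family `T` with respect to the family of
norms `N`, with projections `P t`, inverse maps `S τ t` (the inverses of
`T t τ : Ker P τ → Ker P t`, applied after `Q t = I - P t`), and constants `a < 0 < b`,
`D > 0`. -/
def IsDichotomy {X : Type*} [NormedAddCommGroup X] [NormedSpace ℝ X]
    (T : ℝ → ℝ → X →L[ℝ] X) (N : ℝ → X → ℝ)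
    (P : ℝ → X →L[ℝ] X) (S : ℝ → ℝ → X →L[ℝ] X) (a b D : ℝ) : Prop :=
  a < 0 ∧ 0 < b ∧ 0 < D ∧
  (∀ t, (P t).comp (P t) = P t) ∧
  (∀ τ t, τ ≤ t → (P t).comp (T t τ) = (T t τ).comp (P τ)) ∧
  (∀ τ t, τ ≤ t → ∀ u, T t τ (S τ t (u - P t u)) = u - P t u) ∧
  (∀ τ t, τ ≤ t → ∀ u, S τ t (T t τ u - P t (T t τ u)) = u - P τ u) ∧
  (∀ τ t, τ ≤ t → ∀ u, P τ (S τ t (u - P t u)) = 0) ∧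
  (∀ τ t u, τ ≤ t → N t (T t τ (P τ u)) ≤ D * Real.exp (a * (t - τ)) * N τ u) ∧
  (∀ τ t u, τ ≤ t → N τ (S τ t (u - P t u)) ≤ D * Real.exp (-b * (t - τ)) * N t u)


lemma measurable_N_simpleFunc {X : Type*} [NormedAddCommGroup X]
    (N : ℝ → X → ℝ) (hNmeas : ∀ u : X, Measurable fun t => N t u)
    (f : SimpleFunc ℝ X) : Measurable fun τ => N τ (f τ) := by
  have h : (fun τ => N τ (f τ)) =
      fun τ => ∑ c ∈ f.range, (f ⁻¹' {c}).indicator (fun s => N s c) τ := by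
    funext τ
    rw [Finset.sum_eq_single_of_mem (f τ) (f.mem_range_self τ)]
    · rw [Set.indicator_of_mem (by simp : τ ∈ f ⁻¹' {f τ})]
    · intro c _ hc
      exact Set.indicator_of_notMem (by simp [hc.symm]) _
  rw [h]
  exact Finset.measurable_sum _ fun c _ => (hNmeas c).indicator (f.measurableSet_fiber c)

lemma lipschitz_N {X : Type*} [NormedAddCommGroup X] [NormedSpace ℝ X]
    (N : ℝ → X → ℝ) (C ε : ℝ)
    (hN₂ : ∀ t (u : X), N t u ≤ C * Real.exp (ε * |t|) * ‖u‖)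
    (hNadd : ∀ t (u v : X), N t (u + v) ≤ N t u + N t v)
    (hNsmul : ∀ t (r : ℝ) (u : X), N t (r • u) = |r| * N t u)
    (s : ℝ) : LipschitzWith (C * Real.exp (ε * |s|)).toNNReal (N s) := by
  apply LipschitzWith.of_dist_le_mul
  intro u v
  rw [Real.dist_eq, dist_eq_norm]
  have key : ∀ w z : X, N s w - N s z ≤ N s (w - z) := by
    intro w z
    have := hNadd s (w - z) z
    simpa using this
  have hsymm : N s (v - u) = N s (u - v) := by
    have : v - u = (-1 : ℝ) • (u - v) := by simp
    rw [this, hNsmul]; simp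
  have habs : |N s u - N s v| ≤ N s (u - v) := by
    rw [abs_le]
    constructor
    · have := key v u; rw [hsymm] at this; linarith
    · exact key u v
  refine habs.trans ((hN₂ s (u - v)).trans ?_)
  have : C * Real.exp (ε * |s|) ≤ ((C * Real.exp (ε * |s|)).toNNReal : ℝ) := by
    rw [Real.coe_toNNReal']; exact le_max_left _ _
  exact mul_le_mul_of_nonneg_right this (norm_nonneg _)

lemma aemeasurable_N_comp {X : Type*} [NormedAddCommGroup X] [NormedSpace ℝ X]
    (N : ℝ → X → ℝ) (C ε : ℝ)
    (hN₂ : ∀ t (u : X), N t u ≤ C * Real.exp (ε * |t|) * ‖u‖)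
    (hNadd : ∀ t (u v : X), N t (u + v) ≤ N t u + N t v)
    (hNsmul : ∀ t (r : ℝ) (u : X), N t (r • u) = |r| * N t u)
    (hNmeas : ∀ u : X, Measurable fun t => N t u)
    {y : ℝ → X} (hy : AEStronglyMeasurable y (volume : Measure ℝ)) :
    AEMeasurable (fun τ => N τ (y τ)) (volume : Measure ℝ) := by
  obtain ⟨y', hy'sm, hyy'⟩ := hy
  have hmeas' : Measurable fun τ => N τ (y' τ) := by
    apply measurable_of_tendsto_metrizable' atTop
      (fun n => measurable_N_simpleFunc N hNmeas (hy'sm.approx n))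
    rw [tendsto_pi_nhds]
    intro τ
    exact ((lipschitz_N N C ε hN₂ hNadd hNsmul τ).continuous.tendsto _).comp
      (hy'sm.tendsto_approx τ)
  refine ⟨fun τ => N τ (y' τ), hmeas', ?_⟩
  filter_upwards [hyy'] with τ hτ
  rw [hτ]

/-- Under an exponential dichotomy with respect to the family of norms,
for `y ∈ L^q` the stable-part convolution
`x₁ t = ∫_{-∞}^t T t τ (P τ (y τ)) dτ` is well defined and satisfies
`‖x₁ t‖_t ≤ D/(1 - e^a) · ‖y‖_q` for every `t`. -/
theorem stable_convolution_bound
    {X : Type*} [NormedAddCommGroup X] [NormedSpace ℝ X] [CompleteSpace X]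
    (T : ℝ → ℝ → X →L[ℝ] X) (N : ℝ → X → ℝ) (C ε : ℝ)
    (hN₁ : ∀ t u, ‖u‖ ≤ N t u)
    (hN₂ : ∀ t (u : X), N t u ≤ C * Real.exp (ε * |t|) * ‖u‖)
    (hNadd : ∀ t (u v : X), N t (u + v) ≤ N t u + N t v)
    (hNsmul : ∀ t (r : ℝ) (u : X), N t (r • u) = |r| * N t u)
    (hNmeas : ∀ u : X, Measurable fun t => N t u)
    (P : ℝ → X →L[ℝ] X) (S : ℝ → ℝ → X →L[ℝ] X) (a b D : ℝ)
    (hdich : IsDichotomy T N P S a b D)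
    (q : ℝ≥0∞) (hq : 1 ≤ q)
    (y : ℝ → X) (hy : MemY2 N q y)
    (hmeas : ∀ t, AEStronglyMeasurable (fun τ => T t τ (P τ (y τ))) volume) :
    ∀ t : ℝ, IntegrableOn (fun τ => T t τ (P τ (y τ))) (Iic t) volume ∧
      N t (∫ τ in Iic t, T t τ (P τ (y τ))) ≤
        D / (1 - Real.exp a) * (famLpNorm N q y).toReal := by
  obtain ⟨ha, hb, hD, -, -, -, -, -, hbound, -⟩ := hdich
  have hN0 : ∀ s (u : X), 0 ≤ N s u := fun s u => (norm_nonneg u).trans (hN₁ s u)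
  set g : ℝ → ℝ := fun τ => N τ (y τ) with hgdef
  have hg0 : ∀ τ, 0 ≤ g τ := fun τ => hN0 τ (y τ)
  have hgae : AEMeasurable g volume :=
    aemeasurable_N_comp N C ε hN₂ hNadd hNsmul hNmeas hy.1
  set K' : ℝ≥0∞ := famLpNorm N q y with hK'def
  have hq0 : q ≠ 0 := (zero_lt_one.trans_le hq).ne'
  -- famLpNorm = eLpNorm
  have hFam : K' = eLpNorm g q volume := by
    rw [hK'def]
    unfold famLpNorm
    split_ifs with h
    · rw [h, eLpNorm_exponent_top, eLpNormEssSup]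
      congr 1
      funext s
      exact (Real.enorm_eq_ofReal (hg0 s)).symm
    · rw [eLpNorm_eq_lintegral_rpow_enorm_toReal hq0 h]
      congr 1
      apply lintegral_congr
      intro s
      rw [Real.enorm_eq_ofReal (hg0 s)]
  -- Hölder lemma: small sets
  have hB : ∀ A : Set ℝ, volume A ≤ 1 →
      ∫⁻ τ in A, ENNReal.ofReal (g τ) ≤ K' := by
    intro A hA1
    have h1 : ∫⁻ τ in A, ENNReal.ofReal (g τ) = eLpNorm g 1 (volume.restrict A) := by
      rw [eLpNorm_one_eq_lintegral_enorm]
      apply lintegral_congr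
      intro s
      exact (Real.enorm_eq_ofReal (hg0 s)).symm
    rw [h1, hFam]
    have hexp : 0 ≤ 1 / (1 : ℝ≥0∞).toReal - 1 / q.toReal := by
      rcases eq_or_ne q ∞ with hqt | hqt
      · simp [hqt]
      · have h1q : 1 ≤ q.toReal := by
          rw [← ENNReal.toReal_one]
          exact ENNReal.toReal_mono hqt hq
        have : 1 / q.toReal ≤ 1 := by
          rw [div_le_one (by linarith)]; linarith
        simp only [ENNReal.toReal_one, div_one]
        linarith
    calc eLpNorm g 1 (volume.restrict A)
        ≤ eLpNorm g q (volume.restrict A) *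
            (volume.restrict A) Set.univ ^ (1 / (1 : ℝ≥0∞).toReal - 1 / q.toReal) :=
          eLpNorm_le_eLpNorm_mul_rpow_measure_univ hq hgae.aestronglyMeasurable.restrict
      _ ≤ eLpNorm g q volume * 1 := by
          apply mul_le_mul
          · exact eLpNorm_mono_measure _ Measure.restrict_le_self
          · apply ENNReal.rpow_le_one _ hexp
            rw [Measure.restrict_apply_univ]
            exact hA1
          · exact zero_le
          · exact zero_le
      _ = eLpNorm g q volume := mul_one _
  intro t
  -- key lintegral estimate
  have hA : ∫⁻ τ in Iic t, ENNReal.ofReal (D * Real.exp (a * (t - τ)) * g τ) ≤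
      ENNReal.ofReal D * (1 - ENNReal.ofReal (Real.exp a))⁻¹ * K' := by
    have hcover : Iic t ⊆ ⋃ m : ℕ, Ioc (t - ((m : ℝ) + 1)) (t - m) := by
      intro τ hτ
      have hτt : τ ≤ t := mem_Iic.mp hτ
      simp only [mem_iUnion, mem_Ioc]
      refine ⟨⌊t - τ⌋₊, ?_, ?_⟩
      · have := Nat.lt_floor_add_one (t - τ)
        linarith
      · have := Nat.floor_le (by linarith : (0:ℝ) ≤ t - τ)
        linarith
    calc ∫⁻ τ in Iic t, ENNReal.ofReal (D * Real.exp (a * (t - τ)) * g τ)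
        ≤ ∫⁻ τ in ⋃ m : ℕ, Ioc (t - ((m : ℝ) + 1)) (t - m),
            ENNReal.ofReal (D * Real.exp (a * (t - τ)) * g τ) :=
          lintegral_mono_set hcover
      _ ≤ ∑' m : ℕ, ∫⁻ τ in Ioc (t - ((m : ℝ) + 1)) (t - m),
            ENNReal.ofReal (D * Real.exp (a * (t - τ)) * g τ) :=
          lintegral_iUnion_le _ _
      _ ≤ ∑' m : ℕ, ENNReal.ofReal D * ENNReal.ofReal (Real.exp a) ^ m * K' := by
          apply ENNReal.tsum_le_tsum
          intro m
          have hstep : ∫⁻ τ in Ioc (t - ((m : ℝ) + 1)) (t - m),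
              ENNReal.ofReal (D * Real.exp (a * (t - τ)) * g τ) ≤
              ENNReal.ofReal (D * Real.exp (a * m)) *
                ∫⁻ τ in Ioc (t - ((m : ℝ) + 1)) (t - m), ENNReal.ofReal (g τ) := by
            have hofg : AEMeasurable (fun τ => ENNReal.ofReal (g τ))
                (volume.restrict (Ioc (t - ((m : ℝ) + 1)) (t - m))) :=
              ENNReal.measurable_ofReal.comp_aemeasurable hgae.restrict
            rw [← lintegral_const_mul'' _ hofg]
            apply lintegral_mono_ae
            filter_upwards [ae_restrict_mem measurableSet_Ioc] with τ hτ
            rw [← ENNReal.ofReal_mul (by positivity : (0:ℝ) ≤ D * Real.exp (a * m))]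
            apply ENNReal.ofReal_le_ofReal
            have h1 : a * (t - τ) ≤ a * m :=
              mul_le_mul_of_nonpos_left (by linarith [hτ.2] : (m : ℝ) ≤ t - τ) ha.le
            have h2 : Real.exp (a * (t - τ)) ≤ Real.exp (a * m) := Real.exp_le_exp.mpr h1
            exact mul_le_mul_of_nonneg_right
              (mul_le_mul_of_nonneg_left h2 hD.le) (hg0 τ)
          refine hstep.trans ?_
          have hvol : volume (Ioc (t - ((m : ℝ) + 1)) (t - m)) ≤ 1 := by
            rw [Real.volume_Ioc]
            apply le_of_eq
            rw [show t - (m : ℝ) - (t - ((m : ℝ) + 1)) = 1 by ring]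
            exact ENNReal.ofReal_one
          have := mul_le_mul_right (hB _ hvol) (ENNReal.ofReal (D * Real.exp (a * m)))
          refine this.trans (le_of_eq ?_)
          congr 1
          rw [ENNReal.ofReal_mul hD.le]
          congr 1
          rw [show a * (m : ℝ) = (m : ℝ) * a by ring, Real.exp_nat_mul,
            ENNReal.ofReal_pow (Real.exp_nonneg a)]
      _ = ENNReal.ofReal D * (1 - ENNReal.ofReal (Real.exp a))⁻¹ * K' := by
          rw [ENNReal.tsum_mul_right, ENNReal.tsum_mul_left, ENNReal.tsum_geometric]
  -- finiteness of the bound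
  have hexp1 : ENNReal.ofReal (Real.exp a) < 1 :=
    ENNReal.ofReal_lt_one.mpr (Real.exp_lt_one_iff.mpr ha)
  have hlt : ENNReal.ofReal D * (1 - ENNReal.ofReal (Real.exp a))⁻¹ * K' < ∞ := by
    apply ENNReal.mul_lt_top
    apply ENNReal.mul_lt_top
    · exact ENNReal.ofReal_lt_top
    · rw [ENNReal.inv_lt_top]
      exact tsub_pos_of_lt hexp1
    · exact hy.2
  -- pointwise bound
  set h : ℝ → X := fun τ => T t τ (P τ (y τ)) with hhdef
  have hpt : ∀ τ ∈ Iic t, N t (h τ) ≤ D * Real.exp (a * (t - τ)) * g τ :=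
    fun τ hτ => hbound τ t (y τ) (mem_Iic.mp hτ)
  -- integrability
  have hint : IntegrableOn h (Iic t) volume := by
    refine ⟨(hmeas t).restrict, ?_⟩
    rw [hasFiniteIntegral_def]
    calc ∫⁻ τ in Iic t, (‖h τ‖₊ : ℝ≥0∞)
        ≤ ∫⁻ τ in Iic t, ENNReal.ofReal (D * Real.exp (a * (t - τ)) * g τ) := by
          apply lintegral_mono_ae
          filter_upwards [ae_restrict_mem measurableSet_Iic] with τ hτ
          rw [← enorm_eq_nnnorm, ← ofReal_norm]
          exact ENNReal.ofReal_le_ofReal ((hN₁ t (h τ)).trans (hpt τ hτ))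
      _ ≤ _ := hA
      _ < ∞ := hlt
  refine ⟨hint, ?_⟩
  set I : X := ∫ τ in Iic t, h τ with hIdef
  have hposden : 0 < 1 - Real.exp a := by
    have := Real.exp_lt_one_iff.mpr ha; linarith
  have hRHSval : (ENNReal.ofReal D * (1 - ENNReal.ofReal (Real.exp a))⁻¹ * K').toReal =
      D / (1 - Real.exp a) * K'.toReal := by
    rw [ENNReal.toReal_mul, ENNReal.toReal_mul, ENNReal.toReal_ofReal hD.le,
      ENNReal.toReal_inv, ENNReal.toReal_sub_of_le
        (ENNReal.ofReal_le_one.mpr (Real.exp_le_one_iff.mpr ha.le)) ENNReal.one_ne_top,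
      ENNReal.toReal_one, ENNReal.toReal_ofReal (Real.exp_nonneg a), div_eq_mul_inv]
  by_cases hI : I = 0
  · rw [hI]
    have : N t (0 : X) = 0 := by
      have := hNsmul t 0 0; simpa using this
    rw [this]
    apply mul_nonneg (div_nonneg hD.le hposden.le) ENNReal.toReal_nonneg
  · -- Hahn-Banach functional
    have hfle : ∀ x : (LinearPMap.mkSpanSingleton (K := ℝ) (L := ℝ) (σ := RingHom.id ℝ) I (N t I) hI).domain,
        (LinearPMap.mkSpanSingleton (K := ℝ) (L := ℝ) (σ := RingHom.id ℝ) I (N t I) hI) x ≤ N t x := by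
      rintro ⟨xv, hxv⟩
      obtain ⟨c, rfl⟩ := Submodule.mem_span_singleton.mp hxv
      calc (LinearPMap.mkSpanSingleton (K := ℝ) (L := ℝ) (σ := RingHom.id ℝ) I (N t I) hI) ⟨c • I, hxv⟩
          = c • (N t I) := LinearPMap.mkSpanSingleton'_apply I (N t I) _ c hxv
        _ = c * N t I := rfl
        _ ≤ |c| * N t I := mul_le_mul_of_nonneg_right (le_abs_self c) (hN0 t I)
        _ = N t (c • I) := (hNsmul t c I).symm
    obtain ⟨φlin, hφeq, hφle⟩ := exists_extension_of_le_sublinear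
      (LinearPMap.mkSpanSingleton (K := ℝ) (L := ℝ) (σ := RingHom.id ℝ) I (N t I) hI) (N t)
      (fun c hc x => by rw [hNsmul, abs_of_pos hc])
      (hNadd t) hfle
    have hφbnd : ∀ u : X, ‖φlin u‖ ≤ (C * Real.exp (ε * |t|)) * ‖u‖ := by
      intro u
      rw [Real.norm_eq_abs, abs_le]
      constructor
      · have h1 : φlin (-u) ≤ N t (-u) := hφle (-u)
        have h2 : N t (-u) = N t u := by
          have : -u = (-1 : ℝ) • u := by simp
          rw [this, hNsmul]; simp
        have h3 := (hφle (-u)).trans (h2.le.trans' le_rfl)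
        have h4 : φlin (-u) = -φlin u := by rw [map_neg]
        have := (hN₂ t u)
        rw [h4, h2] at h1
        linarith
      · exact (hφle u).trans (hN₂ t u)
    set φ : X →L[ℝ] ℝ := φlin.mkContinuous (C * Real.exp (ε * |t|)) hφbnd with hφdef
    have hφapp : ∀ u, φ u = φlin u := fun u => rfl
    have hφI : φ I = N t I := by
      rw [hφapp]
      have := hφeq ⟨I, Submodule.mem_span_singleton_self I⟩
      rw [this]
      exact LinearPMap.mkSpanSingleton'_apply_self _ _ _ _
    -- integrability of N t ∘ h
    have haesm2 : AEStronglyMeasurable (fun τ => N t (h τ)) (volume.restrict (Iic t)) :=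
      (lipschitz_N N C ε hN₂ hNadd hNsmul t).continuous.comp_aestronglyMeasurable
        (hmeas t).restrict
    have hint2 : Integrable (fun τ => N t (h τ)) (volume.restrict (Iic t)) := by
      apply Integrable.mono' (hint.norm.const_mul (C * Real.exp (ε * |t|))) haesm2
      filter_upwards with τ
      rw [Real.norm_eq_abs, abs_of_nonneg (hN0 t (h τ))]
      exact hN₂ t (h τ)
    have hintφ : Integrable (fun τ => φ (h τ)) (volume.restrict (Iic t)) :=
      φ.integrable_comp hint
    have step1 : N t I = ∫ τ in Iic t, φ (h τ) := by
      rw [← hφI, hIdef]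
      exact (ContinuousLinearMap.integral_comp_comm φ hint).symm
    have step2 : ∫ τ in Iic t, φ (h τ) ≤ ∫ τ in Iic t, N t (h τ) :=
      integral_mono hintφ hint2 (fun τ => hφle (h τ))
    have step3 : ∫ τ in Iic t, N t (h τ) =
        (∫⁻ τ in Iic t, ENNReal.ofReal (N t (h τ))).toReal := by
      rw [integral_eq_lintegral_of_nonneg_ae
        (Filter.Eventually.of_forall fun τ => hN0 t (h τ)) haesm2]
    have step4 : ∫⁻ τ in Iic t, ENNReal.ofReal (N t (h τ)) ≤
        ENNReal.ofReal D * (1 - ENNReal.ofReal (Real.exp a))⁻¹ * K' := by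
      refine le_trans ?_ hA
      apply lintegral_mono_ae
      filter_upwards [ae_restrict_mem measurableSet_Iic] with τ hτ
      exact ENNReal.ofReal_le_ofReal (hpt τ hτ)
    calc N t I = ∫ τ in Iic t, φ (h τ) := step1
      _ ≤ ∫ τ in Iic t, N t (h τ) := step2
      _ = (∫⁻ τ in Iic t, ENNReal.ofReal (N t (h τ))).toReal := step3
      _ ≤ (ENNReal.ofReal D * (1 - ENNReal.ofReal (Real.exp a))⁻¹ * K').toReal :=
          ENNReal.toReal_mono hlt.ne step4
      _ = D / (1 - Real.exp a) * K'.toReal := hRHSval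
end

section
/- Under an exponential dichotomy with respect to the family of norms, for y ∈ L^q the function x₂(t) = ∫_t^{∞} T(t,τ)_| Q(τ)y(τ) dτ is well-defined and satisfies ‖x₂(t)‖_t ≤ (D/(1−e^{−b}))·‖y‖_q for all t ∈ ℝ. -/
open MeasureTheory Set Filter
open scoped ENNReal

/-- A continuous seminorm-like functional applied to an integral. -/
private lemma seminorm_integral_le {X : Type*} [NormedAddCommGroup X] [NormedSpace ℝ X]
    [CompleteSpace X] (Nt : X → ℝ) (K : ℝ)
    (h1 : ∀ u : X, ‖u‖ ≤ Nt u) (h2 : ∀ u : X, Nt u ≤ K * ‖u‖)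
    (hadd : ∀ u v : X, Nt (u + v) ≤ Nt u + Nt v)
    (hsmul : ∀ (r : ℝ) (u : X), Nt (r • u) = |r| * Nt u)
    (μ : Measure ℝ) (f : ℝ → X) (hf : Integrable f μ)
    (hNf : Integrable (fun τ => Nt (f τ)) μ) :
    Nt (∫ τ, f τ ∂μ) ≤ ∫ τ, Nt (f τ) ∂μ := by
  have hN0 : Nt 0 = 0 := by
    have := hsmul 0 0; simpa using this
  have hNnn : ∀ u : X, 0 ≤ Nt u := fun u => (norm_nonneg u).trans (h1 u)
  set u := ∫ τ, f τ ∂μ with hu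
  rcases eq_or_ne u 0 with h0 | h0
  · rw [h0, hN0]; exact integral_nonneg fun τ => hNnn _
  · have hK1 : 1 ≤ K := by
      have h3 := (h1 u).trans (h2 u)
      have h4 : 0 < ‖u‖ := norm_pos_iff.mpr h0
      nlinarith
    set fl := LinearPMap.mkSpanSingleton (K := ℝ) (L := ℝ) (F := ℝ) (σ := RingHom.id ℝ) u (Nt u) h0 with hfl_def
    have hfl : ∀ x : fl.domain, fl x ≤ Nt x := by
      intro x
      obtain ⟨c, hc⟩ := Submodule.mem_span_singleton.mp x.2
      have hx : (x : X) = c • u := hc.symm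
      have happ : fl ⟨c • u, hx ▸ x.2⟩ = c • Nt u :=
        LinearPMap.mkSpanSingleton'_apply _ _ _ c _
      have hxeq : x = ⟨c • u, hx ▸ x.2⟩ := Subtype.ext hx
      rw [hxeq, happ]
      show c • Nt u ≤ Nt (c • u)
      rw [hsmul, smul_eq_mul]
      exact mul_le_mul_of_nonneg_right (le_abs_self c) (hNnn u)
    obtain ⟨g, hg1, hg2⟩ := exists_extension_of_le_sublinear fl Nt
      (fun c hc x => by rw [hsmul, abs_of_pos hc]) hadd hfl
    · have hgu : g u = Nt u := by
        have := hg1 ⟨u, Submodule.mem_span_singleton_self u⟩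
        rwa [LinearPMap.mkSpanSingleton_apply] at this
      have hgb : ∀ x : X, ‖g x‖ ≤ K * ‖x‖ := by
        intro x
        have hx1 : g x ≤ K * ‖x‖ := (hg2 x).trans (h2 x)
        have hneg : Nt (-x) = Nt x := by
          rw [show (-x : X) = (-1 : ℝ) • x by simp, hsmul]; simp
        have h3 : Nt (-x) ≤ K * ‖x‖ := by rw [hneg]; exact h2 x
        have h4 : g (-x) ≤ K * ‖x‖ := (hg2 (-x)).trans h3
        have hx2 : -(g x) ≤ K * ‖x‖ := by rwa [map_neg] at h4
        rw [Real.norm_eq_abs, abs_le]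
        exact ⟨by linarith, hx1⟩
      set gL : X →L[ℝ] ℝ := g.mkContinuous K hgb with hgL
      have hcomm : gL u = ∫ τ, gL (f τ) ∂μ := by
        rw [hu]; exact (ContinuousLinearMap.integral_comp_comm gL hf).symm
      have : Nt u = gL u := by
        rw [← hgu]; rfl
      rw [this, hcomm]
      exact integral_mono (gL.integrable_comp hf) hNf fun τ => hg2 (f τ)

private lemma famN_continuous {X : Type*} [NormedAddCommGroup X]
    (N : ℝ → X → ℝ) (C ε : ℝ)
    (hN₂ : ∀ t (u : X), N t u ≤ C * Real.exp (ε * |t|) * ‖u‖)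
    (hNadd : ∀ t (u v : X), N t (u + v) ≤ N t u + N t v)
    (t : ℝ) : Continuous (N t) := by
  have hlip : LipschitzWith (Real.toNNReal (C * Real.exp (ε * |t|))) (N t) := by
    apply LipschitzWith.of_dist_le_mul
    intro u v
    rw [Real.dist_eq, dist_eq_norm]
    have hb1 : N t u - N t v ≤ C * Real.exp (ε * |t|) * ‖u - v‖ := by
      have h := hNadd t (u - v) v
      rw [sub_add_cancel] at h
      linarith [hN₂ t (u - v)]
    have hb2 : N t v - N t u ≤ C * Real.exp (ε * |t|) * ‖u - v‖ := by
      have h := hNadd t (v - u) u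
      rw [sub_add_cancel] at h
      have h3 := hN₂ t (v - u)
      rw [norm_sub_rev] at h3
      linarith
    have habs : |N t u - N t v| ≤ C * Real.exp (ε * |t|) * ‖u - v‖ :=
      abs_sub_le_iff.mpr ⟨hb1, hb2⟩
    refine habs.trans ?_
    rw [Real.coe_toNNReal']
    exact mul_le_mul_of_nonneg_right (le_max_left _ _) (norm_nonneg _)
  exact hlip.continuous

private lemma famN_aemeasurable {X : Type*} [NormedAddCommGroup X] [NormedSpace ℝ X]
    (N : ℝ → X → ℝ) (C ε : ℝ)
    (hN₂ : ∀ t (u : X), N t u ≤ C * Real.exp (ε * |t|) * ‖u‖)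
    (hNadd : ∀ t (u v : X), N t (u + v) ≤ N t u + N t v)
    (hNsmul : ∀ t (r : ℝ) (u : X), N t (r • u) = |r| * N t u)
    (hNmeas : ∀ u : X, Measurable fun t => N t u)
    (y : ℝ → X) (hy : AEStronglyMeasurable y volume) :
    AEMeasurable (fun τ => N τ (y τ)) volume := by
  have hN0 : ∀ t, N t (0 : X) = 0 := fun t => by
    have := hNsmul t 0 0; simpa using this
  obtain ⟨ys, hys, hyeq⟩ := hy
  have hsimple : ∀ s : SimpleFunc ℝ X, Measurable fun τ => N τ (s τ) := by
    intro s
    classical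
    induction s using SimpleFunc.induction with
    | @const c s hs =>
      have heq : (fun τ => N τ ((SimpleFunc.piecewise s hs (SimpleFunc.const _ c)
          (SimpleFunc.const _ 0)) τ)) = Set.piecewise s (fun τ => N τ c) (fun τ => N τ 0) := by
        funext τ
        simp only [SimpleFunc.coe_piecewise, SimpleFunc.coe_const, Set.piecewise]
        split_ifs <;> rfl
      rw [heq]
      exact Measurable.piecewise hs (hNmeas c) (hNmeas 0)
    | add hdisj hf hg =>
      rename_i f g
      have heq : (fun τ => N τ ((f + g) τ)) = fun τ => N τ (f τ) + N τ (g τ) := by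
        funext τ
        by_cases hfτ : f τ = 0
        · simp [SimpleFunc.coe_add, hfτ, hN0 τ]
        · have hgτ : g τ = 0 := by
            by_contra hg0
            exact (Set.disjoint_left.mp hdisj (by simpa [Function.mem_support] using hfτ))
              (by simpa [Function.mem_support] using hg0)
          simp [SimpleFunc.coe_add, hgτ, hN0 τ]
      rw [heq]
      exact hf.add hg
  have hmeasys : Measurable fun τ => N τ (ys τ) := by
    apply measurable_of_tendsto_metrizable (fun n => hsimple (hys.approx n))
    rw [tendsto_pi_nhds]
    intro τ
    exact ((famN_continuous N C ε hN₂ hNadd τ).tendsto (ys τ)).comp (hys.tendsto_approx τ)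
  exact hmeasys.aemeasurable.congr (hyeq.mono fun τ h => by simp only [h])

/-- Under an exponential dichotomy with respect to the family of norms,
for `y ∈ L^q` the unstable-part convolution
`x₂ t = ∫_t^∞ T(t,τ)_| (Q τ (y τ)) dτ` is well defined and satisfies
`‖x₂ t‖_t ≤ D/(1 - e^{-b}) · ‖y‖_q` for every `t`. -/
theorem unstable_convolution_bound
    {X : Type*} [NormedAddCommGroup X] [NormedSpace ℝ X] [CompleteSpace X]
    (T : ℝ → ℝ → X →L[ℝ] X) (N : ℝ → X → ℝ) (C ε : ℝ)
    (hN₁ : ∀ t u, ‖u‖ ≤ N t u)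
    (hN₂ : ∀ t (u : X), N t u ≤ C * Real.exp (ε * |t|) * ‖u‖)
    (hNadd : ∀ t (u v : X), N t (u + v) ≤ N t u + N t v)
    (hNsmul : ∀ t (r : ℝ) (u : X), N t (r • u) = |r| * N t u)
    (hNmeas : ∀ u : X, Measurable fun t => N t u)
    (P : ℝ → X →L[ℝ] X) (S : ℝ → ℝ → X →L[ℝ] X) (a b D : ℝ)
    (hdich : IsDichotomy T N P S a b D)
    (q : ℝ≥0∞) (hq : 1 ≤ q)
    (y : ℝ → X) (hy : MemY2 N q y)
    (hmeas : ∀ t, AEStronglyMeasurable (fun τ => S t τ (y τ - P τ (y τ))) volume) :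
    ∀ t : ℝ, IntegrableOn (fun τ => S t τ (y τ - P τ (y τ))) (Ioi t) volume ∧
      N t (∫ τ in Ioi t, S t τ (y τ - P τ (y τ))) ≤
        D / (1 - Real.exp (-b)) * (famLpNorm N q y).toReal := by
  obtain ⟨ha, hb, hD, -, -, -, -, -, -, hS⟩ := hdich
  obtain ⟨hymeas, hyfin⟩ := hy
  have hNnn : ∀ (s : ℝ) (u : X), 0 ≤ N s u := fun s u => (norm_nonneg u).trans (hN₁ s u)
  have hNy : AEMeasurable (fun τ => N τ (y τ)) volume :=
    famN_aemeasurable N C ε hN₂ hNadd hNsmul hNmeas y hymeas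
  have hNyE : AEMeasurable (fun τ => ENNReal.ofReal (N τ (y τ))) volume :=
    ENNReal.measurable_ofReal.comp_aemeasurable hNy
  -- Hölder on unit intervals
  have hA : ∀ c : ℝ, ∫⁻ τ in Ioc c (c + 1), ENNReal.ofReal (N τ (y τ)) ≤ famLpNorm N q y := by
    intro c
    have hvol : volume (Ioc c (c + 1)) = 1 := by
      rw [Real.volume_Ioc]; norm_num
    by_cases hqt : q = ∞
    · rw [hqt]
      simp only [famLpNorm, if_pos rfl]
      calc ∫⁻ τ in Ioc c (c + 1), ENNReal.ofReal (N τ (y τ))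
          ≤ ∫⁻ _ in Ioc c (c + 1), essSup (fun s => ENNReal.ofReal (N s (y s))) volume :=
            lintegral_mono_ae (ae_restrict_of_ae (ENNReal.ae_le_essSup _))
        _ = essSup (fun s => ENNReal.ofReal (N s (y s))) volume := by
            rw [setLIntegral_const, hvol, mul_one]
    · have hp1 : 1 ≤ q.toReal := by
        rw [← ENNReal.toReal_one]
        exact ENNReal.toReal_mono hqt hq
      have hLdef : famLpNorm N q y
          = (∫⁻ τ, ENNReal.ofReal (N τ (y τ)) ^ q.toReal) ^ (1 / q.toReal) := by
        simp [famLpNorm, hqt]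
      rcases eq_or_lt_of_le hp1 with hp | hp
      · rw [hLdef, ← hp]
        norm_num
        exact setLIntegral_le_lintegral _ _
      · have hpq := Real.HolderConjugate.conjExponent hp
        have hmono : ∫⁻ τ in Ioc c (c + 1), ENNReal.ofReal (N τ (y τ))
            ≤ (∫⁻ τ in Ioc c (c + 1), ENNReal.ofReal (N τ (y τ)) ^ q.toReal) ^ (1 / q.toReal)
              * (∫⁻ _ in Ioc c (c + 1), (1 : ℝ≥0∞) ^ Real.conjExponent q.toReal)
                ^ (1 / Real.conjExponent q.toReal) := by
          have h := ENNReal.lintegral_mul_le_Lp_mul_Lq (volume.restrict (Ioc c (c + 1))) hpq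
            (f := fun τ => ENNReal.ofReal (N τ (y τ))) (g := fun _ => (1 : ℝ≥0∞))
            hNyE.restrict aemeasurable_const
          simpa using h
        have hone : (∫⁻ _ in Ioc c (c + 1), (1 : ℝ≥0∞) ^ Real.conjExponent q.toReal)
            ^ (1 / Real.conjExponent q.toReal) = 1 := by
          simp [ENNReal.one_rpow, hvol]
        rw [hone, mul_one] at hmono
        refine hmono.trans ?_
        rw [hLdef]
        exact ENNReal.rpow_le_rpow (setLIntegral_le_lintegral _ _)
          (one_div_nonneg.mpr (by linarith))
  set r := Real.exp (-b) with hrdef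
  have hr0 : 0 < r := Real.exp_pos _
  have hr1 : r < 1 := Real.exp_lt_one_iff.mpr (by linarith)
  set E := ENNReal.ofReal r with hEdef
  have hE1 : E < 1 := by
    rw [hEdef, ← ENNReal.ofReal_one]
    exact (ENNReal.ofReal_lt_ofReal_iff one_pos).mpr hr1
  have hEsub : (1 : ℝ≥0∞) - E ≠ 0 := (tsub_pos_of_lt hE1).ne'
  set L := famLpNorm N q y with hLdef2
  set B := ENNReal.ofReal D * ((1 - E)⁻¹ * L) with hBdef
  have hBne : B ≠ ∞ :=
    ENNReal.mul_ne_top ENNReal.ofReal_ne_top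
      (ENNReal.mul_ne_top (ENNReal.inv_ne_top.mpr hEsub) hyfin.ne)
  intro t
  have hdecomp : Ioi t = ⋃ m : ℕ, Ioc (t + (m : ℝ)) (t + (m : ℝ) + 1) := by
    ext τ
    simp only [mem_Ioi, mem_iUnion, mem_Ioc]
    constructor
    · intro hτ
      have hx : 0 < τ - t := by linarith
      have hc1 : 1 ≤ ⌈τ - t⌉₊ := Nat.one_le_ceil_iff.mpr hx
      refine ⟨⌈τ - t⌉₊ - 1, ?_, ?_⟩
      · have hcast : ((⌈τ - t⌉₊ - 1 : ℕ) : ℝ) = (⌈τ - t⌉₊ : ℝ) - 1 := by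
          push_cast [hc1]; ring
        rw [hcast]
        have := Nat.ceil_lt_add_one hx.le
        linarith
      · have hcast : ((⌈τ - t⌉₊ - 1 : ℕ) : ℝ) = (⌈τ - t⌉₊ : ℝ) - 1 := by
          push_cast [hc1]; ring
        rw [hcast]
        have := Nat.le_ceil (τ - t)
        linarith
    · rintro ⟨m, h1, h2⟩
      have : (0 : ℝ) ≤ m := Nat.cast_nonneg m
      linarith
  have hdisj : Pairwise (Function.onFun Disjoint
      fun m : ℕ => Ioc (t + (m : ℝ)) (t + (m : ℝ) + 1)) := by
    have key : ∀ m n : ℕ, m < n →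
        Disjoint (Ioc (t + (m : ℝ)) (t + (m : ℝ) + 1)) (Ioc (t + (n : ℝ)) (t + (n : ℝ) + 1)) := by
      intro m n hmn
      apply Set.Ioc_disjoint_Ioc.mpr
      have hmn' : (m : ℝ) + 1 ≤ n := by exact_mod_cast hmn
      calc min (t + (m : ℝ) + 1) (t + (n : ℝ) + 1) ≤ t + (m : ℝ) + 1 := min_le_left _ _
        _ ≤ t + (n : ℝ) := by linarith
        _ ≤ max (t + (m : ℝ)) (t + (n : ℝ)) := le_max_right _ _
    intro m n hmn
    rcases hmn.lt_or_gt with h | h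
    · exact key m n h
    · exact (key n m h).symm
  have hBle : ∫⁻ τ in Ioi t, ENNReal.ofReal (D * Real.exp (-b * (τ - t)) * N τ (y τ)) ≤ B := by
    rw [hdecomp, lintegral_iUnion (fun m => measurableSet_Ioc) hdisj]
    have hterm : ∀ m : ℕ, ∫⁻ τ in Ioc (t + (m : ℝ)) (t + (m : ℝ) + 1),
        ENNReal.ofReal (D * Real.exp (-b * (τ - t)) * N τ (y τ))
        ≤ ENNReal.ofReal D * (E ^ m * L) := by
      intro m
      have hstep : ∀ τ ∈ Ioc (t + (m : ℝ)) (t + (m : ℝ) + 1),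
          ENNReal.ofReal (D * Real.exp (-b * (τ - t)) * N τ (y τ))
          ≤ (ENNReal.ofReal D * E ^ m) * ENNReal.ofReal (N τ (y τ)) := by
        intro τ hτ
        have hm : (m : ℝ) ≤ τ - t := by
          have := hτ.1; linarith
        have hexp : Real.exp (-b * (τ - t)) ≤ r ^ m := by
          rw [hrdef, ← Real.exp_nat_mul]
          apply Real.exp_le_exp.mpr
          nlinarith
        calc ENNReal.ofReal (D * Real.exp (-b * (τ - t)) * N τ (y τ))
            = ENNReal.ofReal (D * Real.exp (-b * (τ - t))) * ENNReal.ofReal (N τ (y τ)) :=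
              ENNReal.ofReal_mul (by positivity)
          _ ≤ ENNReal.ofReal (D * r ^ m) * ENNReal.ofReal (N τ (y τ)) := by
              apply mul_le_mul_left
              apply ENNReal.ofReal_le_ofReal
              exact mul_le_mul_of_nonneg_left hexp hD.le
          _ = (ENNReal.ofReal D * E ^ m) * ENNReal.ofReal (N τ (y τ)) := by
              rw [ENNReal.ofReal_mul hD.le, hEdef, ← ENNReal.ofReal_pow hr0.le]
      calc ∫⁻ τ in Ioc (t + (m : ℝ)) (t + (m : ℝ) + 1),
            ENNReal.ofReal (D * Real.exp (-b * (τ - t)) * N τ (y τ))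
          ≤ ∫⁻ τ in Ioc (t + (m : ℝ)) (t + (m : ℝ) + 1),
            (ENNReal.ofReal D * E ^ m) * ENNReal.ofReal (N τ (y τ)) :=
            setLIntegral_mono_ae ((hNyE.restrict).const_mul _) (ae_of_all _ hstep)
        _ = (ENNReal.ofReal D * E ^ m) * ∫⁻ τ in Ioc (t + (m : ℝ)) (t + (m : ℝ) + 1),
            ENNReal.ofReal (N τ (y τ)) :=
            lintegral_const_mul' _ _
              (ENNReal.mul_ne_top ENNReal.ofReal_ne_top (ENNReal.pow_ne_top ENNReal.ofReal_ne_top))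
        _ ≤ (ENNReal.ofReal D * E ^ m) * L := mul_le_mul_right (hA (t + (m : ℝ))) _
        _ = ENNReal.ofReal D * (E ^ m * L) := by rw [mul_assoc]
    calc ∑' m : ℕ, ∫⁻ τ in Ioc (t + (m : ℝ)) (t + (m : ℝ) + 1),
          ENNReal.ofReal (D * Real.exp (-b * (τ - t)) * N τ (y τ))
        ≤ ∑' m : ℕ, ENNReal.ofReal D * (E ^ m * L) := ENNReal.tsum_le_tsum hterm
      _ = B := by
          rw [ENNReal.tsum_mul_left, ENNReal.tsum_mul_right, ENNReal.tsum_geometric]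
  have hkey : ∀ᵐ τ ∂volume.restrict (Ioi t),
      ENNReal.ofReal (N t (S t τ (y τ - P τ (y τ))))
      ≤ ENNReal.ofReal (D * Real.exp (-b * (τ - t)) * N τ (y τ)) := by
    filter_upwards [ae_restrict_mem measurableSet_Ioi] with τ hτ
    exact ENNReal.ofReal_le_ofReal (hS t τ (y τ) (le_of_lt hτ))
  have hgb : ∫⁻ τ in Ioi t, ENNReal.ofReal (N t (S t τ (y τ - P τ (y τ)))) ≤ B :=
    le_trans (lintegral_mono_ae hkey) hBle
  have hint : IntegrableOn (fun τ => S t τ (y τ - P τ (y τ))) (Ioi t) volume := by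
    refine ⟨(hmeas t).restrict, ?_⟩
    rw [hasFiniteIntegral_iff_norm]
    calc ∫⁻ τ in Ioi t, ENNReal.ofReal ‖S t τ (y τ - P τ (y τ))‖
        ≤ ∫⁻ τ in Ioi t, ENNReal.ofReal (N t (S t τ (y τ - P τ (y τ)))) :=
          lintegral_mono fun τ => ENNReal.ofReal_le_ofReal (hN₁ t _)
      _ ≤ B := hgb
      _ < ∞ := hBne.lt_top
  have hNgint : IntegrableOn (fun τ => N t (S t τ (y τ - P τ (y τ)))) (Ioi t) volume := by
    refine ⟨(famN_continuous N C ε hN₂ hNadd t).comp_aestronglyMeasurable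
      ((hmeas t).restrict), ?_⟩
    rw [hasFiniteIntegral_iff_norm]
    calc ∫⁻ τ in Ioi t, ENNReal.ofReal ‖N t (S t τ (y τ - P τ (y τ)))‖
        = ∫⁻ τ in Ioi t, ENNReal.ofReal (N t (S t τ (y τ - P τ (y τ)))) :=
          lintegral_congr fun τ => by rw [Real.norm_eq_abs, abs_of_nonneg (hNnn t _)]
      _ ≤ B := hgb
      _ < ∞ := hBne.lt_top
  refine ⟨hint, ?_⟩
  have hle := seminorm_integral_le (N t) (C * Real.exp (ε * |t|)) (hN₁ t) (hN₂ t) (hNadd t)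
    (hNsmul t) (volume.restrict (Ioi t)) _ hint hNgint
  refine hle.trans ?_
  have heq : ∫ τ in Ioi t, N t (S t τ (y τ - P τ (y τ)))
      = (∫⁻ τ in Ioi t, ENNReal.ofReal (N t (S t τ (y τ - P τ (y τ))))).toReal :=
    integral_eq_lintegral_of_nonneg_ae (Filter.Eventually.of_forall fun τ => hNnn t _) hNgint.1
  rw [heq]
  refine (ENNReal.toReal_mono hBne hgb).trans ?_
  have h1E : (1 : ℝ≥0∞) - E = ENNReal.ofReal (1 - r) := by
    rw [hEdef, ENNReal.ofReal_sub 1 hr0.le, ENNReal.ofReal_one]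
  rw [hBdef, ENNReal.toReal_mul, ENNReal.toReal_mul, ENNReal.toReal_ofReal hD.le,
    ENNReal.toReal_inv, h1E, ENNReal.toReal_ofReal (by linarith : (0:ℝ) ≤ 1 - r)]
  rw [div_eq_mul_inv, mul_assoc]
end

section
/- Under an exponential dichotomy, any bounded continuous solution x of x(t) = T(t,τ)x(τ) + ∫_τ^t T(t,s)y(s) ds (for all t ≥ τ, y ∈ L^q) satisfies P(t)x(t) = ∫_{−∞}^t T(t,τ)P(τ)y(τ) dτ for every t ∈ ℝ. -/
open MeasureTheory Set Filter
open scoped ENNReal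

open scoped Topology


lemma aux_N_meas {X : Type*} [NormedAddCommGroup X]
    (N : ℝ → X → ℝ) (hNcont : ∀ t, Continuous fun u => N t u)
    (hNmeas : ∀ u : X, Measurable fun t => N t u)
    {y : ℝ → X} (hy : AEStronglyMeasurable y (volume : Measure ℝ)) :
    AEMeasurable (fun τ => N τ (y τ)) volume := by
  obtain ⟨g, hg, hyg⟩ := hy
  borelize X
  set s : Set X := closure (range g) with hs
  haveI : TopologicalSpace.SeparableSpace s :=
    (hg.isSeparable_range.closure).separableSpace
  haveI : SecondCountableTopology s := UniformSpace.secondCountable_of_separable s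
  have hmeas : Measurable (Function.uncurry fun (v : s) (τ : ℝ) => N τ (v : X)) :=
    measurable_uncurry_of_continuous_of_measurable
      (fun τ => (hNcont τ).comp continuous_subtype_val)
      (fun v => hNmeas (v : X))
  have hg' : Measurable fun τ => (⟨g τ, subset_closure (mem_range_self τ)⟩ : s) :=
    hg.measurable.subtype_mk
  have hmg : Measurable fun τ => N τ (g τ) := hmeas.comp (hg'.prodMk measurable_id)
  exact hmg.aemeasurable.congr (by filter_upwards [hyg] with τ h; rw [h])

lemma aux_T_meas {X : Type*} [NormedAddCommGroup X] [NormedSpace ℝ X]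
    (T : ℝ → ℝ → X →L[ℝ] X) (t : ℝ)
    (hContB : ∀ (u : X), ContinuousOn (fun s => T t s u) (Iic t))
    {y : ℝ → X} (hy : AEStronglyMeasurable y (volume : Measure ℝ)) :
    AEStronglyMeasurable (fun s => T t s (y s)) (volume.restrict (Iic t)) := by
  obtain ⟨g, hg, hyg⟩ := hy
  borelize X
  set V : Set X := closure (range g) with hV
  haveI : TopologicalSpace.SeparableSpace V :=
    (hg.isSeparable_range.closure).separableSpace
  haveI : SecondCountableTopology V := UniformSpace.secondCountable_of_separable V
  have hmin : Continuous fun s : ℝ => min s t := continuous_id.min continuous_const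
  have hmeas : StronglyMeasurable
      (Function.uncurry fun (v : V) (σ : ℝ) => T t (min σ t) (v : X)) := by
    apply stronglyMeasurable_uncurry_of_continuous_of_stronglyMeasurable
    · intro σ
      exact (T t (min σ t)).continuous.comp continuous_subtype_val
    · intro v
      exact ((hContB (v : X)).comp_continuous hmin fun σ => min_le_right σ t).stronglyMeasurable
  have hg' : Measurable fun τ => (⟨g τ, subset_closure (mem_range_self τ)⟩ : V) :=
    hg.measurable.subtype_mk
  have hmg : StronglyMeasurable fun σ => T t (min σ t) (g σ) :=
    hmeas.comp_measurable (hg'.prodMk measurable_id)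
  apply hmg.aestronglyMeasurable.restrict.congr
  filter_upwards [ae_restrict_mem measurableSet_Iic, ae_restrict_of_ae hyg] with σ hσ h
  rw [min_eq_left hσ, h]

lemma aux_exp_intOn {b t : ℝ} (hb : b < 0) :
    IntegrableOn (fun τ => Real.exp (b * (t - τ))) (Iic t) := by
  have hc : (0:ℝ) < -b := by linarith
  have h1 : IntegrableOn (fun τ => Real.exp (-b * τ)) (Iic t) := by
    rw [← integrable_indicator_iff measurableSet_Iic]
    have heq : (Iic t).indicator (fun τ => Real.exp (-b * τ)) =
        fun τ => ((Iic (-b * t)).indicator Real.exp) (-b * τ) := by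
      ext τ
      by_cases h : τ ≤ t
      · rw [indicator_of_mem (mem_Iic.2 h), indicator_of_mem]
        exact mem_Iic.2 (by nlinarith)
      · rw [indicator_of_notMem (fun hh => h (mem_Iic.1 hh)),
          indicator_of_notMem]
        intro hh
        exact h (by nlinarith [mem_Iic.1 hh])
    rw [heq]
    exact (integrable_comp_mul_left_iff _ hc.ne').2
      ((integrable_indicator_iff measurableSet_Iic).2 (integrableOn_exp_Iic _))
  have : (fun τ => Real.exp (b * (t - τ))) =
      fun τ => Real.exp (b * t) * Real.exp (-b * τ) := by
    ext τ; rw [← Real.exp_add]; ring_nf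
  rw [this]
  exact h1.const_mul _

lemma aux_memLp_exp (a D t : ℝ) (ha : a < 0) (r : ℝ≥0∞) :
    MemLp (fun τ => D * Real.exp (a * (t - τ))) r (volume.restrict (Iic t)) := by
  have hcont : Continuous fun τ => D * Real.exp (a * (t - τ)) := by fun_prop
  rcases eq_or_ne r ∞ with hr | hrtop
  · subst hr
    apply memLp_top_of_bound hcont.aestronglyMeasurable |D|
    filter_upwards [ae_restrict_mem measurableSet_Iic] with τ hτ
    have h1 : Real.exp (a * (t - τ)) ≤ 1 := by
      rw [Real.exp_le_one_iff]
      have : 0 ≤ t - τ := by simpa [sub_nonneg] using hτ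
      nlinarith
    rw [Real.norm_eq_abs, abs_mul, Real.abs_exp]
    calc |D| * Real.exp (a * (t - τ)) ≤ |D| * 1 := by
          exact mul_le_mul_of_nonneg_left h1 (abs_nonneg D)
      _ = |D| := mul_one _
  rcases eq_or_ne r 0 with hr0 | hr0
  · subst hr0
    exact memLp_zero_iff_aestronglyMeasurable.2 hcont.aestronglyMeasurable
  refine ⟨hcont.aestronglyMeasurable, ?_⟩
  rw [eLpNorm_eq_lintegral_rpow_enorm_toReal hr0 hrtop]
  have hrr : 0 < r.toReal := ENNReal.toReal_pos hr0 hrtop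
  apply ENNReal.rpow_lt_top_of_nonneg (by positivity)
  have hint : IntegrableOn
      (fun τ => |D| ^ r.toReal * Real.exp (a * r.toReal * (t - τ))) (Iic t) := by
    have := (aux_exp_intOn (b := a * r.toReal) (t := t) (by nlinarith)).const_mul
      (|D| ^ r.toReal)
    exact this
  have heq : ∀ τ : ℝ, ‖D * Real.exp (a * (t - τ))‖ₑ ^ r.toReal =
      ENNReal.ofReal (|D| ^ r.toReal * Real.exp (a * r.toReal * (t - τ))) := by
    intro τ
    rw [Real.enorm_eq_ofReal_abs, ENNReal.ofReal_rpow_of_nonneg (abs_nonneg _) hrr.le]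
    congr 1
    rw [abs_mul, Real.abs_exp, Real.mul_rpow (abs_nonneg _) (Real.exp_pos _).le,
      ← Real.exp_mul]
    ring_nf
  have : ∫⁻ τ in Iic t, ‖D * Real.exp (a * (t - τ))‖ₑ ^ r.toReal
      = ∫⁻ τ in Iic t, ENNReal.ofReal (|D| ^ r.toReal * Real.exp (a * r.toReal * (t - τ))) := by
    simp_rw [heq]
  rw [this]
  exact hint.lintegral_lt_top.ne

/-- Under an exponential dichotomy, any bounded continuous solution `x`
of the integral equation with inhomogeneity `y ∈ L^q` satisfies
`P t (x t) = ∫_{-∞}^t T t τ (P τ (y τ)) dτ` for every `t`. -/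
theorem stable_part_of_bounded_solution
    {X : Type*} [NormedAddCommGroup X] [NormedSpace ℝ X] [CompleteSpace X]
    (T : ℝ → ℝ → X →L[ℝ] X) (N : ℝ → X → ℝ) (C ε K c : ℝ)
    (hN₁ : ∀ t u, ‖u‖ ≤ N t u)
    (hN₂ : ∀ t (u : X), N t u ≤ C * Real.exp (ε * |t|) * ‖u‖)
    (hNadd : ∀ t (u v : X), N t (u + v) ≤ N t u + N t v)
    (hNsmul : ∀ t (r : ℝ) (u : X), N t (r • u) = |r| * N t u)
    (hNmeas : ∀ u : X, Measurable fun t => N t u)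
    (hId : ∀ t, T t t = ContinuousLinearMap.id ℝ X)
    (hCoc : ∀ τ s t, τ ≤ s → s ≤ t → ∀ u, T t s (T s τ u) = T t τ u)
    (hCont : ∀ τ (u : X), ContinuousOn (fun t => T t τ u) (Ici τ))
    (hContB : ∀ τ (u : X), ContinuousOn (fun s => T τ s u) (Iic τ))
    (hBd : ∀ τ t (u : X), τ ≤ t → N t (T t τ u) ≤ K * Real.exp (c * (t - τ)) * N τ u)
    (P : ℝ → X →L[ℝ] X) (S : ℝ → ℝ → X →L[ℝ] X) (a b D : ℝ)
    (hdich : IsDichotomy T N P S a b D)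
    (q : ℝ≥0∞) (hq : 1 ≤ q)
    (y : ℝ → X) (hy : MemY2 N q y)
    (hmeas₁ : ∀ t, AEStronglyMeasurable (fun τ => T t τ (P τ (y τ))) volume)
    (x : ℝ → X) (hxcont : Continuous x) (hxbdd : ∃ M, ∀ t, N t (x t) ≤ M)
    (hsol : SolvesEq T x y) :
    ∀ t : ℝ, P t (x t) = ∫ τ in Iic t, T t τ (P τ (y τ)) := by
  obtain ⟨ha, hbpos, hD, hPP, hPT, hTS, hST, hPS, hstab, hunst⟩ := hdich
  have hN0 : ∀ s (u : X), 0 ≤ N s u := fun s u => (norm_nonneg u).trans (hN₁ s u)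
  have hNcont : ∀ s, Continuous fun u => N s u := by
    intro s
    have key : ∀ w z : X, N s w - N s z ≤ |C| * Real.exp (ε * |s|) * ‖w - z‖ := by
      intro w z
      have h1 : N s w ≤ N s z + N s (w - z) := by
        have := hNadd s z (w - z)
        simpa using this
      have h2 : N s (w - z) ≤ C * Real.exp (ε * |s|) * ‖w - z‖ := hN₂ s (w - z)
      have h3 : C * Real.exp (ε * |s|) * ‖w - z‖ ≤ |C| * Real.exp (ε * |s|) * ‖w - z‖ :=
        mul_le_mul_of_nonneg_right
          (mul_le_mul_of_nonneg_right (le_abs_self C) (Real.exp_pos _).le) (norm_nonneg _)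
      linarith
    have hlip : LipschitzWith ((|C| * Real.exp (ε * |s|)).toNNReal) fun u => N s u := by
      apply LipschitzWith.of_dist_le_mul
      intro u v
      rw [Real.dist_eq, dist_eq_norm, Real.coe_toNNReal _ (by positivity), abs_sub_le_iff]
      refine ⟨key u v, ?_⟩
      rw [norm_sub_rev]
      exact key v u
    exact hlip.continuous
  set n : ℝ → ℝ := fun τ => N τ (y τ) with hn
  have hn_meas : AEMeasurable n volume := aux_N_meas N hNcont hNmeas hy.1
  have hfam : famLpNorm N q y = eLpNorm n q volume := by
    have hof : ∀ τ, ENNReal.ofReal (n τ) = ‖n τ‖ₑ :=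
      fun τ => (Real.enorm_eq_ofReal (hN0 τ (y τ))).symm
    rw [famLpNorm]
    split_ifs with h
    · rw [h, eLpNorm_exponent_top, eLpNormEssSup]
      exact congrArg (essSup · volume) (funext hof)
    · rw [eLpNorm_eq_lintegral_rpow_enorm_toReal (lt_of_lt_of_le zero_lt_one hq).ne' h]
      congr 2; funext τ; exact congrArg (· ^ q.toReal) (hof τ)
  have hnq : eLpNorm n q volume < ∞ := hfam ▸ hy.2
  intro t
  set g : ℝ → X := fun τ => T t τ (P τ (y τ)) with hgdef
  have hpqr : (1 : ℝ≥0∞) / 1 = 1 / q + 1 / (1 - q⁻¹)⁻¹ := by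
    rw [one_div, one_div, one_div, inv_inv, inv_one]
    exact (add_tsub_cancel_of_le (ENNReal.inv_le_one.2 hq)).symm
  have hexp : MemLp (fun τ => D * Real.exp (a * (t - τ))) (1 - q⁻¹)⁻¹
      (volume.restrict (Iic t)) := aux_memLp_exp a D t ha _
  have hg_int : IntegrableOn g (Iic t) := by
    have hmem : MemLp g 1 (volume.restrict (Iic t)) := by
      refine ⟨(hmeas₁ t).restrict, ?_⟩
      have h1 : eLpNorm g 1 (volume.restrict (Iic t)) ≤
          eLpNorm (n • fun τ => D * Real.exp (a * (t - τ))) 1 (volume.restrict (Iic t)) := by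
        apply eLpNorm_mono_ae
        filter_upwards [ae_restrict_mem measurableSet_Iic] with τ hτ
        have h2 : ‖g τ‖ ≤ D * Real.exp (a * (t - τ)) * n τ :=
          (hN₁ t (g τ)).trans (hstab τ t (y τ) hτ)
        calc ‖g τ‖ ≤ D * Real.exp (a * (t - τ)) * n τ := h2
          _ = n τ * (D * Real.exp (a * (t - τ))) := by ring
          _ ≤ |n τ * (D * Real.exp (a * (t - τ)))| := le_abs_self _
          _ = ‖(n • fun τ => D * Real.exp (a * (t - τ))) τ‖ := rfl
      refine lt_of_le_of_lt (h1.trans (eLpNorm_smul_le_mul_eLpNorm hexp.1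
        hn_meas.aestronglyMeasurable.restrict
        (hpqr := ⟨by simpa only [one_div] using hpqr.symm⟩))) ?_
      exact ENNReal.mul_lt_top
        ((eLpNorm_mono_measure n (Measure.restrict_le_self (s := Iic t))).trans_lt hnq)
        hexp.2
    exact memLp_one_iff_integrable.1 hmem
  have key : ∀ τ, τ ≤ t →
      P t (x t) = T t τ (P τ (x τ)) + ∫ s in Ioc τ t, T t s (P s (y s)) := by
    intro τ hτ
    haveI : IsFiniteMeasure (volume.restrict (Ioc τ t)) :=
      ⟨by rw [Measure.restrict_apply_univ]; exact measure_Ioc_lt_top⟩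
    have hn_int : IntegrableOn n (Ioc τ t) := by
      have hmem : MemLp n q (volume.restrict (Ioc τ t)) :=
        ⟨hn_meas.aestronglyMeasurable.restrict,
          lt_of_le_of_lt (eLpNorm_mono_measure _ Measure.restrict_le_self) hnq⟩
      exact hmem.integrable hq
    have hm : AEStronglyMeasurable (fun s => T t s (y s)) (volume.restrict (Ioc τ t)) :=
      (aux_T_meas T t (fun u => hContB t u) hy.1).mono_measure
        (Measure.restrict_mono Ioc_subset_Iic_self le_rfl)
    have hint : IntegrableOn (fun s => T t s (y s)) (Ioc τ t) := by
      refine Integrable.mono' (hn_int.const_mul (|K| * Real.exp (|c| * (t - τ)))) hm ?_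
      filter_upwards [ae_restrict_mem measurableSet_Ioc] with s hs
      have h1 : ‖T t s (y s)‖ ≤ K * Real.exp (c * (t - s)) * N s (y s) :=
        (hN₁ t _).trans (hBd s t (y s) hs.2)
      have h2 : K * Real.exp (c * (t - s)) * N s (y s) ≤
          |K| * Real.exp (|c| * (t - τ)) * n s := by
        apply mul_le_mul _ le_rfl (hN0 s (y s)) (by positivity)
        have he : Real.exp (c * (t - s)) ≤ Real.exp (|c| * (t - τ)) := by
          apply Real.exp_le_exp.2
          have h3 : c * (t - s) ≤ |c| * (t - s) :=
            mul_le_mul_of_nonneg_right (le_abs_self c) (by linarith [hs.2])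
          have h4 : |c| * (t - s) ≤ |c| * (t - τ) :=
            mul_le_mul_of_nonneg_left (by linarith [hs.1]) (abs_nonneg c)
          linarith
        calc K * Real.exp (c * (t - s)) ≤ |K| * Real.exp (c * (t - s)) :=
              mul_le_mul_of_nonneg_right (le_abs_self K) (Real.exp_pos _).le
          _ ≤ |K| * Real.exp (|c| * (t - τ)) :=
              mul_le_mul_of_nonneg_left he (abs_nonneg K)
      exact h1.trans h2
    have heq := hsol τ t hτ
    have happ := congrArg (fun u => P t u) heq
    simp only [map_add] at happ
    rw [happ]
    congr 1
    · have := DFunLike.congr_fun (hPT τ t hτ) (x τ)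
      simpa using this
    · rw [← (P t).integral_comp_comm hint]
      apply setIntegral_congr_fun measurableSet_Ioc
      intro s hs
      have := DFunLike.congr_fun (hPT s t hs.2) (y s)
      simpa using this
  have hFlim : Tendsto (fun τ => T t τ (P τ (x τ))) atBot (𝓝 (0 : X)) := by
    obtain ⟨M, hM⟩ := hxbdd
    apply squeeze_zero_norm' (a := fun τ => D * Real.exp (a * (t - τ)) * M)
    · filter_upwards [eventually_le_atBot t] with τ hτ
      refine (hN₁ t _).trans ((hstab τ t (x τ) hτ).trans ?_)
      exact mul_le_mul_of_nonneg_left (hM τ) (mul_nonneg hD.le (Real.exp_pos _).le)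
    · have h1 : Tendsto (fun τ : ℝ => a * (t - τ)) atBot atBot := by
        have h0 : Tendsto (fun τ : ℝ => -a * τ) atBot atBot :=
          (tendsto_id (α := ℝ)).const_mul_atBot (by linarith)
        have := tendsto_atBot_add_const_left atBot (a * t) h0
        refine this.congr fun τ => by ring
      have h2 : Tendsto (fun τ : ℝ => Real.exp (a * (t - τ))) atBot (𝓝 0) :=
        Real.tendsto_exp_atBot.comp h1
      have h3 := (h2.const_mul D).mul_const M
      simpa using h3
  have hGlim : Tendsto (fun τ => ∫ s in Ioc τ t, T t s (P s (y s))) atBot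
      (𝓝 (∫ τ in Iic t, g τ)) := by
    have h0 := intervalIntegral_tendsto_integral_Iic (μ := volume) t hg_int
      (tendsto_id (α := ℝ) (x := atBot))
    refine Tendsto.congr' ?_ h0
    filter_upwards [eventually_le_atBot t] with τ hτ
    simp only [id_eq]
    rw [intervalIntegral.integral_of_le hτ]
  have hsum : Tendsto (fun τ => T t τ (P τ (x τ)) + ∫ s in Ioc τ t, T t s (P s (y s)))
      atBot (𝓝 (0 + ∫ τ in Iic t, g τ)) := hFlim.add hGlim
  rw [zero_add] at hsum
  have hfinal : Tendsto (fun _ : ℝ => P t (x t)) atBot (𝓝 (∫ τ in Iic t, g τ)) := by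
    refine Tendsto.congr' ?_ hsum
    filter_upwards [eventually_le_atBot t] with τ hτ
    exact (key τ hτ).symm
  exact tendsto_nhds_unique tendsto_const_nhds hfinal
end

section
/- Assume that for each y ∈ L^q there exists a unique x ∈ L^p ∩ C_b satisfying the integral equation x(t) = T(t,τ)x(τ) + ∫_τ^t T(t,s)y(s) ds for t ≥ τ. For τ ∈ ℝ define F^s_τ = {x ∈ X : sup_{t≥τ}‖T(t,τ)x‖_t < ∞ and the function equal to T(t,τ)x for t≥τ and 0 for t<τ lies in L^p}, and F^u_τ = {x ∈ X : ∃φ_x:(−∞,τ]→X with φ_x(τ)=x, φ_x(t)=T(t,s)φ_x(s) for s≤t≤τ, sup_{t≤τ}‖φ_x(t)‖_t < ∞, and the extension by 0 lies in L^p}. Then X = F^s_τ ⊕ F^u_τ. -/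
open MeasureTheory Set Filter
open scoped ENNReal

/-- The stable set `F^s_τ`: points with forward trajectory bounded in the norms `‖·‖_t`
whose zero-extension lies in `L^p`. -/
def Fs {X : Type*} [NormedAddCommGroup X] [NormedSpace ℝ X]
    (T : ℝ → ℝ → X →L[ℝ] X) (N : ℝ → X → ℝ) (p : ℝ≥0∞) (τ : ℝ) : Set X :=
  {x | (∃ M, ∀ t, τ ≤ t → N t (T t τ x) ≤ M) ∧
    famLpNorm N p (fun t => if τ ≤ t then T t τ x else 0) < ∞}

/-- The unstable set `F^u_τ`: points admitting a backward trajectory bounded in the norms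
`‖·‖_t` whose zero-extension lies in `L^p`. -/
def Fu {X : Type*} [NormedAddCommGroup X] [NormedSpace ℝ X]
    (T : ℝ → ℝ → X →L[ℝ] X) (N : ℝ → X → ℝ) (p : ℝ≥0∞) (τ : ℝ) : Set X :=
  {x | ∃ φ : ℝ → X, φ τ = x ∧ (∀ s t, s ≤ t → t ≤ τ → φ t = T t s (φ s)) ∧
    (∃ M, ∀ t, t ≤ τ → N t (φ t) ≤ M) ∧
    famLpNorm N p (fun t => if t ≤ τ then φ t else 0) < ∞}

lemma famLp_mono {X : Type*} [NormedAddCommGroup X] (N : ℝ → X → ℝ)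
    (p : ℝ≥0∞) (f g : ℝ → X) (h : ∀ t, N t (f t) ≤ N t (g t)) :
    famLpNorm N p f ≤ famLpNorm N p g := by
  unfold famLpNorm
  split_ifs
  · exact essSup_mono_ae (Filter.Eventually.of_forall fun t => ENNReal.ofReal_le_ofReal (h t))
  · exact ENNReal.rpow_le_rpow (lintegral_mono fun t =>
      ENNReal.rpow_le_rpow (ENNReal.ofReal_le_ofReal (h t)) ENNReal.toReal_nonneg)
      (by positivity)

lemma famLp_lt_top_of_support {X : Type*} [NormedAddCommGroup X] (N : ℝ → X → ℝ)
    (p : ℝ≥0∞) (hp : 1 ≤ p) (f : ℝ → X) (a b B : ℝ)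
    (hB : ∀ t, N t (f t) ≤ B)
    (h0 : ∀ t, t ∉ Icc a b → N t (f t) = 0) :
    famLpNorm N p f < ∞ := by
  unfold famLpNorm
  split_ifs with hpt
  · exact lt_of_le_of_lt (essSup_le_of_ae_le _ (Filter.Eventually.of_forall fun t =>
      ENNReal.ofReal_le_ofReal (hB t))) ENNReal.ofReal_lt_top
  · have hr : 0 < p.toReal := ENNReal.toReal_pos (zero_lt_one.trans_le hp).ne' hpt
    have hb : ∫⁻ t, ENNReal.ofReal (N t (f t)) ^ p.toReal ≤
        ∫⁻ t, (Icc a b).indicator (fun _ => ENNReal.ofReal B ^ p.toReal) t := by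
      apply lintegral_mono; intro t
      by_cases ht : t ∈ Icc a b
      · rw [Set.indicator_of_mem ht]
        exact ENNReal.rpow_le_rpow (ENNReal.ofReal_le_ofReal (hB t)) hr.le
      · rw [Set.indicator_of_notMem ht]
        show ENNReal.ofReal (N t (f t)) ^ p.toReal ≤ 0
        rw [h0 t ht]
        simp [ENNReal.zero_rpow_of_pos hr]
    rw [lintegral_indicator measurableSet_Icc, setLIntegral_const] at hb
    have hfin : ENNReal.ofReal B ^ p.toReal * volume (Icc a b) < ∞ := by
      apply ENNReal.mul_lt_top (ENNReal.rpow_lt_top_of_nonneg hr.le ENNReal.ofReal_ne_top)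
      simp [Real.volume_Icc]
    exact ENNReal.rpow_lt_top_of_nonneg (by positivity) (lt_of_le_of_lt hb hfin).ne

lemma famLp_lt_top_piece {X : Type*} [NormedAddCommGroup X] (N : ℝ → X → ℝ)
    (p : ℝ≥0∞) (hp : 1 ≤ p) (f g h : ℝ → X) (S : Set ℝ) (hS : MeasurableSet S)
    (h1 : ∀ t ∈ S, N t (f t) ≤ N t (g t)) (h2 : ∀ t ∉ S, N t (f t) ≤ N t (h t))
    (hg : famLpNorm N p g < ∞) (hh : famLpNorm N p h < ∞) :
    famLpNorm N p f < ∞ := by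
  unfold famLpNorm at *
  split_ifs at * with hpt
  · have hgs := ENNReal.ae_le_essSup (μ := volume) fun t => ENNReal.ofReal (N t (g t))
    have hhs := ENNReal.ae_le_essSup (μ := volume) fun t => ENNReal.ofReal (N t (h t))
    refine lt_of_le_of_lt (essSup_le_of_ae_le _ ?_) (max_lt hg hh)
    filter_upwards [hgs, hhs] with t hG hH
    by_cases ht : t ∈ S
    · exact le_max_of_le_left ((ENNReal.ofReal_le_ofReal (h1 t ht)).trans hG)
    · exact le_max_of_le_right ((ENNReal.ofReal_le_ofReal (h2 t ht)).trans hH)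
  · have hr : 0 < p.toReal := ENNReal.toReal_pos (zero_lt_one.trans_le hp).ne' hpt
    have h1r : (0:ℝ) < 1 / p.toReal := by positivity
    have hgi : ∫⁻ t, ENNReal.ofReal (N t (g t)) ^ p.toReal < ∞ :=
      (ENNReal.rpow_lt_top_iff_of_pos h1r).mp hg
    have hhi : ∫⁻ t, ENNReal.ofReal (N t (h t)) ^ p.toReal < ∞ :=
      (ENNReal.rpow_lt_top_iff_of_pos h1r).mp hh
    have hsplit := (lintegral_add_compl (μ := volume) (fun t => ENNReal.ofReal (N t (f t)) ^ p.toReal) hS).symm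
    have hb1 : ∫⁻ t in S, ENNReal.ofReal (N t (f t)) ^ p.toReal ≤
        ∫⁻ t, ENNReal.ofReal (N t (g t)) ^ p.toReal := by
      refine le_trans (lintegral_mono_ae ?_) (setLIntegral_le_lintegral _ _)
      exact (ae_restrict_iff' hS).mpr (Filter.Eventually.of_forall fun t ht =>
        ENNReal.rpow_le_rpow (ENNReal.ofReal_le_ofReal (h1 t ht)) hr.le)
    have hb2 : ∫⁻ t in Sᶜ, ENNReal.ofReal (N t (f t)) ^ p.toReal ≤
        ∫⁻ t, ENNReal.ofReal (N t (h t)) ^ p.toReal := by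
      refine le_trans (lintegral_mono_ae ?_) (setLIntegral_le_lintegral _ _)
      exact (ae_restrict_iff' hS.compl).mpr (Filter.Eventually.of_forall fun t ht =>
        ENNReal.rpow_le_rpow (ENNReal.ofReal_le_ofReal (h2 t ht)) hr.le)
    have : ∫⁻ t, ENNReal.ofReal (N t (f t)) ^ p.toReal < ∞ := by
      rw [hsplit]
      exact lt_of_le_of_lt (add_le_add hb1 hb2) (ENNReal.add_lt_top.mpr ⟨hgi, hhi⟩)
    exact ENNReal.rpow_lt_top_of_nonneg h1r.le this.ne

/-- **Lemma 3.** If for each `y ∈ L^q` there is a unique `x ∈ L^p ∩ C_b`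
satisfying the integral equation, then `X = F^s_τ ⊕ F^u_τ` for every `τ`. -/
theorem admissibility_implies_splitting
    {X : Type*} [NormedAddCommGroup X] [NormedSpace ℝ X] [CompleteSpace X]
    (T : ℝ → ℝ → X →L[ℝ] X) (N : ℝ → X → ℝ) (C ε K c : ℝ)
    (hN₁ : ∀ t u, ‖u‖ ≤ N t u)
    (hN₂ : ∀ t (u : X), N t u ≤ C * Real.exp (ε * |t|) * ‖u‖)
    (hNadd : ∀ t (u v : X), N t (u + v) ≤ N t u + N t v)
    (hNsmul : ∀ t (r : ℝ) (u : X), N t (r • u) = |r| * N t u)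
    (hNmeas : ∀ u : X, Measurable fun t => N t u)
    (hId : ∀ t, T t t = ContinuousLinearMap.id ℝ X)
    (hCoc : ∀ τ s t, τ ≤ s → s ≤ t → ∀ u, T t s (T s τ u) = T t τ u)
    (hCont : ∀ τ (u : X), ContinuousOn (fun t => T t τ u) (Ici τ))
    (hContB : ∀ τ (u : X), ContinuousOn (fun s => T τ s u) (Iic τ))
    (hBd : ∀ τ t (u : X), τ ≤ t → N t (T t τ u) ≤ K * Real.exp (c * (t - τ)) * N τ u)
    (hK : 0 < K)
    (p q : ℝ≥0∞) (hq : 1 ≤ q) (hpq : q ≤ p)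
    (hAdm : ∀ y : ℝ → X, MemY2 N q y →
      ∃! x : ℝ → X, MemY1 N p x ∧ SolvesEq T x y) :
    ∀ τ : ℝ, (∀ u : X, ∃ v ∈ Fs T N p τ, ∃ w ∈ Fu T N p τ, u = v + w) ∧
      Fs T N p τ ∩ Fu T N p τ = {0} := by
  intro τ
  have hp : 1 ≤ p := hq.trans hpq
  have hNneg : ∀ t (u : X), 0 ≤ N t u := fun t u => (norm_nonneg u).trans (hN₁ t u)
  have hN0 : ∀ t, N t (0 : X) = 0 := fun t => by simpa using hNsmul t 0 0
  have hNneg' : ∀ t (u : X), N t (-u) = N t u := fun t u => by simpa using hNsmul t (-1) u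
  have hexp : ∀ s : ℝ, 0 ≤ s → s ≤ 1 → c * s ≤ |c| := by
    intro s h1 h2
    nlinarith [le_abs_self c, abs_nonneg c]
  have hBd' : ∀ (x₀ : X) (t : ℝ), τ ≤ t → t ≤ τ + 1 →
      N t (T t τ x₀) ≤ K * Real.exp |c| * N τ x₀ := by
    intro x₀ t h1 h2
    refine (hBd τ t x₀ h1).trans ?_
    have he := Real.exp_le_exp.mpr (hexp (t - τ) (by linarith) (by linarith))
    exact mul_le_mul_of_nonneg_right (mul_le_mul_of_nonneg_left he hK.le) (hNneg τ x₀)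
  have hY2zero : MemY2 N q (fun _ => (0:X)) :=
    ⟨aestronglyMeasurable_const,
      famLp_lt_top_of_support N q hq _ 0 1 0 (fun t => (hN0 t).le) (fun t _ => hN0 t)⟩
  have hY1zero : MemY1 N p (fun _ => (0:X)) :=
    ⟨continuous_const, ⟨0, fun t => (hN0 t).le⟩,
      famLp_lt_top_of_support N p hp _ 0 1 0 (fun t => (hN0 t).le) (fun t _ => hN0 t)⟩
  have hSzero : SolvesEq T (fun _ => (0:X)) (fun _ => (0:X)) := by
    intro σ t hσt; simp
  have h0Fs : (0:X) ∈ Fs T N p τ := by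
    refine ⟨⟨0, fun t ht => by simp [hN0]⟩, ?_⟩
    refine famLp_lt_top_of_support N p hp _ 0 1 0 (fun t => ?_) (fun t _ => ?_) <;>
    · by_cases h : τ ≤ t <;> simp [h, hN0]
  have h0Fu : (0:X) ∈ Fu T N p τ := by
    refine ⟨fun _ => 0, rfl, fun s t _ _ => by simp, ⟨0, fun t _ => (hN0 t).le⟩, ?_⟩
    refine famLp_lt_top_of_support N p hp _ 0 1 0 (fun t => ?_) (fun t _ => ?_) <;>
    · by_cases h : t ≤ τ <;> simp [h, hN0]
  constructor
  · -- surjectivity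
    intro u
    set y : ℝ → X := (Ioc τ (τ+1)).indicator (fun s => T s τ u) with hy
    have hy2 : MemY2 N q y := by
      constructor
      · rw [hy]
        exact (aestronglyMeasurable_indicator_iff measurableSet_Ioc).mpr
          (((hCont τ u).mono (Ioc_subset_Icc_self.trans Icc_subset_Ici_self)).aestronglyMeasurable measurableSet_Ioc)
      · refine famLp_lt_top_of_support N q hq _ τ (τ+1) (K * Real.exp |c| * N τ u)
          (fun t => ?_) (fun t ht => ?_)
        · by_cases ht : t ∈ Ioc τ (τ+1)
          · rw [hy, Set.indicator_of_mem ht]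
            exact hBd' u t ht.1.le ht.2
          · rw [hy, Set.indicator_of_notMem ht, hN0]
            exact mul_nonneg (mul_nonneg hK.le (Real.exp_pos _).le) (hNneg τ u)
        · rw [hy, Set.indicator_of_notMem (fun hmem => ht (Ioc_subset_Icc_self hmem)), hN0]
    obtain ⟨x, ⟨hx1, hxeq⟩, -⟩ := hAdm y hy2
    obtain ⟨hxc, ⟨Mx, hMx⟩, hxLp⟩ := hx1
    have key1 : ∀ s t, s ≤ t → t ≤ τ → x t = T t s (x s) := by
      intro s t hst htτ
      have h := hxeq s t hst
      have hint : ∫ σ in Ioc s t, T t σ (y σ) = 0 := by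
        rw [setIntegral_congr_fun measurableSet_Ioc (g := fun _ => (0:X)) ?_]
        · simp
        · intro σ hσ
          have hσ' : σ ∉ Ioc τ (τ+1) := fun hmem => absurd hmem.1 (not_lt.mpr (hσ.2.trans htτ))
          simp [hy, Set.indicator_of_notMem hσ']
      rw [h, hint, add_zero]
    have key2 : ∀ t, τ + 1 ≤ t → x t = T t τ (x τ + u) := by
      intro t ht
      have h1 : τ ≤ t := by linarith
      have h := hxeq τ t h1
      have hfun : (fun s => T t s (y s)) = (Ioc τ (τ+1)).indicator (fun σ => T t σ (T σ τ u)) := by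
        funext s
        by_cases hs : s ∈ Ioc τ (τ+1)
        · simp [hy, Set.indicator_of_mem hs]
        · simp [hy, Set.indicator_of_notMem hs]
      have hint : ∫ s in Ioc τ t, T t s (y s) = T t τ u := by
        rw [show (fun s => T t s (y s)) = (Ioc τ (τ+1)).indicator (fun σ => T t σ (T σ τ u)) from hfun]
        rw [setIntegral_indicator measurableSet_Ioc,
          Set.inter_eq_self_of_subset_right (Ioc_subset_Ioc le_rfl ht),
          setIntegral_congr_fun measurableSet_Ioc
            (g := fun _ => T t τ u) (fun σ hσ => hCoc τ σ t hσ.1.le (hσ.2.trans ht) u),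
          setIntegral_const]
        have hv : (volume (Ioc τ (τ+1))).toReal = 1 := by
          rw [Real.volume_Ioc]
          norm_num
        rw [measureReal_def, hv, one_smul]
      rw [h, hint, map_add]
    refine ⟨x τ + u, ?_, -(x τ), ?_, by abel⟩
    · -- Fs membership
      refine ⟨⟨max (K * Real.exp |c| * N τ (x τ + u)) Mx, fun t ht => ?_⟩, ?_⟩
      · by_cases h2 : t ≤ τ + 1
        · exact le_max_of_le_left (hBd' (x τ + u) t ht h2)
        · rw [← key2 t (by linarith)]
          exact le_max_of_le_right (hMx t)
      · refine famLp_lt_top_piece N p hp _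
          (fun t => if t ∈ Icc τ (τ+1) then T t τ (x τ + u) else 0) x
          (Icc τ (τ+1)) measurableSet_Icc (fun t ht => ?_) (fun t ht => ?_) ?_ hxLp
        · simp only [if_pos ht, if_pos ht.1, le_refl]
        · by_cases h1 : τ ≤ t
          · have h2 : τ + 1 ≤ t := by
              rcases not_and_or.mp ht with h | h
              · exact absurd h1 h
              · linarith [not_le.mp h]
            simp only [if_pos h1]
            rw [← key2 t h2]
          · simp only [if_neg h1]
            rw [hN0]
            exact hNneg t (x t)
        · refine famLp_lt_top_of_support N p hp _ τ (τ+1) (K * Real.exp |c| * N τ (x τ + u))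
            (fun t => ?_) (fun t ht => ?_)
          · by_cases ht : t ∈ Icc τ (τ+1)
            · simp only [if_pos ht]
              exact hBd' _ t ht.1 ht.2
            · simp only [if_neg ht]
              rw [hN0]
              exact mul_nonneg (mul_nonneg hK.le (Real.exp_pos _).le) (hNneg τ _)
          · simp only [if_neg ht]
            exact hN0 t
    · -- Fu membership
      refine ⟨fun t => -(x t), rfl, fun s t hst htτ => ?_, ⟨Mx, fun t ht => ?_⟩, ?_⟩
      · show -(x t) = T t s (-(x s))
        rw [key1 s t hst htτ, map_neg]
      · show N t (-(x t)) ≤ Mx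
        rw [hNneg']; exact hMx t
      · refine lt_of_le_of_lt (famLp_mono N p _ x fun t => ?_) hxLp
        by_cases h : t ≤ τ
        · simp only [if_pos h]
          exact (hNneg' t (x t)).le
        · simp only [if_neg h]
          rw [hN0]
          exact hNneg t (x t)
  · -- trivial intersection
    apply Set.Subset.antisymm
    · rintro x ⟨⟨⟨Ms, hMs⟩, hfs⟩, φ, hφτ, hφcoc, ⟨Mu, hMu⟩, hfu⟩
      set z : ℝ → X := fun t => if τ ≤ t then T t τ x else φ t with hz
      have hzτ : z τ = x := by simp [hz, hId]
      have hzT : ∀ t, τ ≤ t → z t = T t τ x := fun t ht => by simp [hz, ht]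
      have hzφ : ∀ t, t ≤ τ → z t = φ t := by
        intro t ht
        by_cases h : τ ≤ t
        · have htτ : t = τ := le_antisymm ht h
          subst htτ
          rw [hzτ, ← hφτ]
        · simp [hz, h]
      have hcont1 : ContinuousOn z (Ici τ) := (hCont τ x).congr fun t ht => hzT t ht
      have hcont2 : ContinuousOn z (Iic τ) := by
        intro t₀ ht₀
        have hψ : ContinuousWithinAt (fun t => T t (t₀-1) (φ (t₀-1))) (Iic τ ∩ Ici (t₀-1)) t₀ :=
          ((hCont (t₀-1) (φ (t₀-1))) t₀ (mem_Ici.mpr (by linarith))).mono inter_subset_right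
        have heq : ∀ t ∈ Iic τ ∩ Ici (t₀-1), z t = T t (t₀-1) (φ (t₀-1)) := by
          intro t ht
          rw [hzφ t ht.1]
          exact hφcoc (t₀-1) t ht.2 ht.1
        have hcw : ContinuousWithinAt z (Iic τ ∩ Ici (t₀-1)) t₀ :=
          hψ.congr heq (heq t₀ ⟨ht₀, mem_Ici.mpr (by linarith)⟩)
        exact (continuousWithinAt_inter (Ici_mem_nhds (by linarith))).mp hcw
      have hzc : Continuous z := by
        rw [continuous_iff_continuousAt]
        intro t₀
        rcases lt_trichotomy t₀ τ with h | h | h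
        · exact hcont2.continuousAt (Iic_mem_nhds h)
        · subst h
          have hu := (hcont2 t₀ (mem_Iic.mpr le_rfl)).union (hcont1 t₀ (mem_Ici.mpr le_rfl))
          rwa [Iic_union_Ici, continuousWithinAt_univ] at hu
        · exact hcont1.continuousAt (Ici_mem_nhds h)
      have hzY1 : MemY1 N p z := by
        refine ⟨hzc, ⟨max Ms Mu, fun t => ?_⟩, ?_⟩
        · by_cases h : τ ≤ t
          · rw [hzT t h]; exact le_max_of_le_left (hMs t h)
          · rw [hzφ t (le_of_not_ge h)]
            exact le_max_of_le_right (hMu t (le_of_not_ge h))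
        · refine famLp_lt_top_piece N p hp z (fun t => if τ ≤ t then T t τ x else 0)
            (fun t => if t ≤ τ then φ t else 0) (Ici τ) measurableSet_Ici
            (fun t ht => ?_) (fun t ht => ?_) hfs hfu
          · have ht' : τ ≤ t := ht
            simp only [hzT t ht', if_pos ht', le_refl]
          · have h' : t ≤ τ := le_of_lt (not_le.mp ht)
            simp only [hzφ t h', if_pos h', le_refl]
      have hzsolve : SolvesEq T z (fun _ => (0:X)) := by
        intro σ t hσt
        simp only [map_zero, integral_zero, add_zero]
        by_cases h1 : τ ≤ σ
        · rw [hzT σ h1, hzT t (h1.trans hσt), ← hCoc τ σ t h1 hσt x]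
        · have hσ' : σ ≤ τ := le_of_lt (not_le.mp h1)
          rw [hzφ σ hσ']
          by_cases h2 : τ ≤ t
          · rw [hzT t h2]
            have hx' : x = T τ σ (φ σ) := by rw [← hφτ]; exact hφcoc σ τ hσ' le_rfl
            rw [hx', hCoc σ τ t hσ' h2]
          · have ht' : t ≤ τ := le_of_not_ge h2
            rw [hzφ t ht']
            exact hφcoc σ t hσt ht'
      obtain ⟨x₀, -, huniq⟩ := hAdm (fun _ => (0:X)) hY2zero
      have e1 := huniq z ⟨hzY1, hzsolve⟩
      have e2 := huniq (fun _ => (0:X)) ⟨hY1zero, hSzero⟩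
      have hz0 : z τ = 0 := by rw [e1.trans e2.symm]
      rw [hzτ] at hz0
      simp [hz0]
    · rintro x hx
      rw [Set.mem_singleton_iff] at hx
      subst hx
      exact ⟨h0Fs, h0Fu⟩
end

section
/- In the admissibility setting (H : D(H) ⊂ L^p∩C_b → L^q bijective with bounded inverse G), the projection P(τ) : X → F^s_τ along F^u_τ satisfies the uniform bound ‖P(τ)x‖_τ ≤ (K²e^{2c}‖G‖ + 1)‖x‖_τ for all x ∈ X and τ ∈ ℝ. -/
open MeasureTheory Set Filter
open Topology
open scoped ENNReal

section AuxLemmas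

/-- `L^p`-type functional on nonnegative functions. -/
noncomputable def nnLp (p : ℝ≥0∞) (F : ℝ → ℝ≥0∞) : ℝ≥0∞ :=
  if p = ∞ then essSup F volume
  else (∫⁻ t, F t ^ p.toReal) ^ (1 / p.toReal)

lemma famLp_eq_nnLp {X : Type*} [NormedAddCommGroup X] (N : ℝ → X → ℝ) (p : ℝ≥0∞) (f : ℝ → X) :
    famLpNorm N p f = nnLp p (fun t => ENNReal.ofReal (N t (f t))) := rfl

lemma nnLp_mono {p : ℝ≥0∞} {F G : ℝ → ℝ≥0∞} (h : ∀ t, F t ≤ G t) :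
    nnLp p F ≤ nnLp p G := by
  unfold nnLp
  split
  · exact essSup_mono_ae (Filter.Eventually.of_forall h)
  · exact ENNReal.rpow_le_rpow (lintegral_mono fun t =>
      ENNReal.rpow_le_rpow (h t) ENNReal.toReal_nonneg) (by positivity)

lemma nnLp_toReal_pos {p : ℝ≥0∞} (hp1 : 1 ≤ p) (hp : p ≠ ∞) : 0 < p.toReal :=
  ENNReal.toReal_pos (by intro h; rw [h] at hp1; exact absurd hp1 (by simp)) hp

lemma nnLp_one_le_toReal {p : ℝ≥0∞} (hp1 : 1 ≤ p) (hp : p ≠ ∞) : 1 ≤ p.toReal := by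
  have := ENNReal.toReal_mono hp hp1
  simpa using this

lemma nnLp_add_le {p : ℝ≥0∞} (hp1 : 1 ≤ p) {F G : ℝ → ℝ≥0∞}
    (hF : AEMeasurable F (volume : Measure ℝ)) (hG : AEMeasurable G (volume : Measure ℝ)) :
    nnLp p (fun t => F t + G t) ≤ nnLp p F + nnLp p G := by
  unfold nnLp
  split
  · refine essSup_le_of_ae_le _ ?_
    filter_upwards [ENNReal.ae_le_essSup F, ENNReal.ae_le_essSup G] with t h1 h2
    exact add_le_add h1 h2
  · exact ENNReal.lintegral_Lp_add_le hF hG (nnLp_one_le_toReal hp1 (by assumption))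

lemma nnLp_zero {p : ℝ≥0∞} (hp1 : 1 ≤ p) : nnLp p (fun _ => 0) = 0 := by
  unfold nnLp
  split
  · exact le_antisymm
      (essSup_le_of_ae_le _ (Filter.Eventually.of_forall fun _ => le_rfl)) zero_le
  · rw [show (fun (_ : ℝ) => (0:ℝ≥0∞) ^ p.toReal) = fun _ => 0 from funext fun _ =>
      ENNReal.zero_rpow_of_pos (nnLp_toReal_pos hp1 (by assumption))]
    simp [ENNReal.zero_rpow_of_pos, one_div,
      inv_pos.2 (nnLp_toReal_pos hp1 (by assumption))]

lemma nnLp_le_of_bound {p : ℝ≥0∞} (hp1 : 1 ≤ p) {F : ℝ → ℝ≥0∞} {A : Set ℝ} {cc : ℝ≥0∞}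
    (hA : MeasurableSet A) (hvol : volume A = 1)
    (hbd : ∀ t ∈ A, F t ≤ cc) (h0 : ∀ t ∉ A, F t = 0) :
    nnLp p F ≤ cc := by
  unfold nnLp
  split
  · refine essSup_le_of_ae_le _ (Filter.Eventually.of_forall fun t => ?_)
    by_cases ht : t ∈ A
    · exact hbd t ht
    · rw [h0 t ht]; exact zero_le
  · have hr : 0 < p.toReal := nnLp_toReal_pos hp1 (by assumption)
    calc (∫⁻ t, F t ^ p.toReal) ^ (1 / p.toReal)
        ≤ (∫⁻ t, A.indicator (fun _ => cc ^ p.toReal) t) ^ (1 / p.toReal) := by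
          refine ENNReal.rpow_le_rpow (lintegral_mono fun t => ?_) (by positivity)
          by_cases ht : t ∈ A
          · rw [Set.indicator_of_mem ht]
            exact ENNReal.rpow_le_rpow (hbd t ht) hr.le
          · rw [h0 t ht, Set.indicator_of_notMem ht, ENNReal.zero_rpow_of_pos hr]
      _ = cc := by
          rw [lintegral_indicator_const hA, hvol, mul_one, one_div,
            ENNReal.rpow_rpow_inv hr.ne']

lemma nnLp_le_of_lower_bound {p : ℝ≥0∞} (hp1 : 1 ≤ p) {F : ℝ → ℝ≥0∞} {A : Set ℝ} {cc : ℝ≥0∞}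
    (hA : MeasurableSet A) (hvol : volume A = 1)
    (hbd : ∀ t ∈ A, cc ≤ F t) :
    cc ≤ nnLp p F := by
  unfold nnLp
  split
  · by_contra h
    push_neg at h
    have hS : volume {t : ℝ | ¬ F t ≤ essSup F volume} = 0 := ae_iff.1 (ENNReal.ae_le_essSup F)
    have hsub : A ⊆ {t : ℝ | ¬ F t ≤ essSup F volume} := fun t ht =>
      not_le.2 (lt_of_lt_of_le h (hbd t ht))
    have := measure_mono_null hsub hS
    rw [hvol] at this
    simp at this
  · have hr : 0 < p.toReal := nnLp_toReal_pos hp1 (by assumption)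
    calc cc = (∫⁻ t, A.indicator (fun _ => cc ^ p.toReal) t) ^ (1 / p.toReal) := by
          rw [lintegral_indicator_const hA, hvol, mul_one, one_div,
            ENNReal.rpow_rpow_inv hr.ne']
      _ ≤ (∫⁻ t, F t ^ p.toReal) ^ (1 / p.toReal) := by
          refine ENNReal.rpow_le_rpow (lintegral_mono fun t => ?_) (by positivity)
          by_cases ht : t ∈ A
          · rw [Set.indicator_of_mem ht]
            exact ENNReal.rpow_le_rpow (hbd t ht) hr.le
          · rw [Set.indicator_of_notMem ht]; exact zero_le

variable {X : Type*} [NormedAddCommGroup X]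

lemma meas_ofReal_N {N : ℝ → X → ℝ} {C ε : ℝ} (hC : 0 ≤ C)
    (hlip : ∀ t (a b : X), N t a ≤ N t b + C * Real.exp (ε * |t|) * ‖a - b‖)
    (hNmeas : ∀ u : X, Measurable fun t => N t u)
    {g : ℝ → X} (hg : StronglyMeasurable g) :
    Measurable fun t => ENNReal.ofReal (N t (g t)) := by
  obtain ⟨D, hDc, hDsub⟩ := hg.isSeparable_range
  have hDne : D.Nonempty := by
    rcases D.eq_empty_or_nonempty with h | h
    · obtain ⟨y, hy⟩ := Set.range_nonempty g
      have := hDsub hy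
      rw [h] at this
      simp at this
    · exact h
  haveI : Countable D := hDc.to_subtype
  haveI : Nonempty D := hDne.to_subtype
  have key : ∀ t, ENNReal.ofReal (N t (g t)) =
      ⨅ d : D, ENNReal.ofReal (N t (d : X) + C * Real.exp (ε * |t|) * ‖g t - (d : X)‖) := by
    intro t
    set L : ℝ := C * Real.exp (ε * |t|) with hLdef
    have hL : 0 ≤ L := mul_nonneg hC (Real.exp_pos _).le
    apply le_antisymm
    · exact le_iInf fun d => ENNReal.ofReal_le_ofReal (hlip t (g t) d)
    · apply ENNReal.le_of_forall_pos_le_add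
      intro δ hδ _
      have hgt : g t ∈ closure D := hDsub (Set.mem_range_self t)
      obtain ⟨d, hdD, hdist⟩ := Metric.mem_closure_iff.1 hgt ((δ : ℝ) / (2 * (L + 1)))
        (by positivity)
      refine le_trans (iInf_le _ ⟨d, hdD⟩) ?_
      have h1 : N t d ≤ N t (g t) + L * ‖d - g t‖ := hlip t d (g t)
      have hnd : ‖g t - d‖ = dist (g t) d := (dist_eq_norm _ _).symm
      have hdn : ‖d - g t‖ = dist (g t) d := by rw [dist_eq_norm, norm_sub_rev]
      have hcancel : (δ : ℝ) / (2 * (L + 1)) * (2 * (L + 1)) = (δ : ℝ) :=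
        div_mul_cancel₀ _ (by positivity)
      have h2 : N t d + L * ‖g t - d‖ ≤ N t (g t) + (δ : ℝ) := by
        rw [hnd]
        rw [hdn] at h1
        nlinarith [dist_nonneg (x := g t) (y := d), hdist, hL]
      calc ENNReal.ofReal (N t d + L * ‖g t - d‖)
          ≤ ENNReal.ofReal (N t (g t) + (δ : ℝ)) := ENNReal.ofReal_le_ofReal h2
        _ ≤ ENNReal.ofReal (N t (g t)) + ENNReal.ofReal (δ : ℝ) := ENNReal.ofReal_add_le
        _ = ENNReal.ofReal (N t (g t)) + (δ : ℝ≥0∞) := by rw [ENNReal.ofReal_coe_nnreal]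
  simp only [key]
  refine Measurable.iInf fun d => ENNReal.measurable_ofReal.comp ?_
  exact (hNmeas d).add ((measurable_const.mul
    (Real.measurable_exp.comp (measurable_abs.const_mul ε))).mul
    ((hg.sub stronglyMeasurable_const).norm.measurable))

lemma aemeas_ofReal_N {N : ℝ → X → ℝ} {C ε : ℝ} (hC : 0 ≤ C)
    (hlip : ∀ t (a b : X), N t a ≤ N t b + C * Real.exp (ε * |t|) * ‖a - b‖)
    (hNmeas : ∀ u : X, Measurable fun t => N t u)
    {A : Set ℝ} (hA : MeasurableSet A) {h : ℝ → X} (hh : ContinuousOn h A) :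
    AEMeasurable (fun t => ENNReal.ofReal (N t (A.indicator h t))) (volume : Measure ℝ) := by
  have hsm : AEStronglyMeasurable (A.indicator h) (volume : Measure ℝ) :=
    (aestronglyMeasurable_indicator_iff hA).2 (hh.aestronglyMeasurable hA)
  obtain ⟨g, hgsm, hgae⟩ := hsm
  refine ⟨fun t => ENNReal.ofReal (N t (g t)), meas_ofReal_N hC hlip hNmeas hgsm, ?_⟩
  filter_upwards [hgae] with t ht
  rw [ht]

variable [NormedSpace ℝ X]

lemma backward_continuousOn {T : ℝ → ℝ → X →L[ℝ] X}
    (hCont : ∀ τ (u : X), ContinuousOn (fun t => T t τ u) (Ici τ))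
    {τ : ℝ} {φ : ℝ → X} (hφ : ∀ s t, s ≤ t → t ≤ τ → φ t = T t s (φ s)) :
    ContinuousOn φ (Iic τ) := by
  intro t₀ ht₀
  have ht₀' : (t₀ : ℝ) ∈ Iic τ := ht₀
  have h2 : ContinuousWithinAt (fun t => T t (t₀ - 1) (φ (t₀ - 1))) (Icc (t₀ - 1) τ) t₀ :=
    ((hCont (t₀ - 1) (φ (t₀ - 1)) t₀ (by simp)).mono Icc_subset_Ici_self)
  have h3 : ContinuousWithinAt φ (Icc (t₀ - 1) τ) t₀ :=
    h2.congr (fun t ht => hφ (t₀ - 1) t ht.1 ht.2)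
      (hφ (t₀ - 1) t₀ (by linarith) ht₀')
  refine h3.mono_of_mem_nhdsWithin ?_
  have heq : Icc (t₀ - 1) τ = Iic τ ∩ Ici (t₀ - 1) := by
    rw [Set.Iic_inter_Ici]
  rw [heq]
  exact inter_mem_nhdsWithin _ (Ici_mem_nhds (by linarith))

omit [NormedSpace ℝ X] in
lemma glue_continuous {τ : ℝ} {f g : ℝ → X} (hf : ContinuousOn f (Iic τ))
    (hg : ContinuousOn g (Ici τ)) (hfg : f τ = g τ) :
    Continuous (fun t => if t ≤ τ then f t else g t) := by
  rw [← continuousOn_univ]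
  have huniv : (univ : Set ℝ) = Iic τ ∪ Ici τ := by
    ext x; simp [le_total]
  rw [huniv]
  intro x _
  apply ContinuousWithinAt.union
  · by_cases hxτ : x ≤ τ
    · exact (hf x hxτ).congr (fun t ht => if_pos ht) (if_pos hxτ)
    · exact continuousWithinAt_of_notMem_closure (by simpa [closure_Iic] using hxτ)
  · by_cases hxτ : τ ≤ x
    · refine (hg x hxτ).congr ?_ ?_
      · intro t ht
        by_cases h : t ≤ τ
        · have htτ : t = τ := le_antisymm h ht
          rw [if_pos h, htτ, hfg]
        · exact if_neg h
      · by_cases h : x ≤ τ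
        · rw [if_pos h, le_antisymm h hxτ, hfg]
        · exact if_neg h
    · exact continuousWithinAt_of_notMem_closure (by simpa [closure_Ici] using hxτ)

end AuxLemmas
/-- In the admissibility setting, with `G = H⁻¹` bounded (of norm at
most `normG`), the projection `Pr τ` of `X` onto `F^s_τ` along `F^u_τ` satisfies
`‖Pr τ u‖_τ ≤ (K² e^{2c} ‖G‖ + 1) ‖u‖_τ` for all `u ∈ X` and `τ ∈ ℝ`. -/
theorem projection_uniform_bound
    {X : Type*} [NormedAddCommGroup X] [NormedSpace ℝ X] [CompleteSpace X]
    (T : ℝ → ℝ → X →L[ℝ] X) (N : ℝ → X → ℝ) (C ε K c normG : ℝ)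
    (hN₁ : ∀ t u, ‖u‖ ≤ N t u)
    (hN₂ : ∀ t (u : X), N t u ≤ C * Real.exp (ε * |t|) * ‖u‖)
    (hNadd : ∀ t (u v : X), N t (u + v) ≤ N t u + N t v)
    (hNsmul : ∀ t (r : ℝ) (u : X), N t (r • u) = |r| * N t u)
    (hNmeas : ∀ u : X, Measurable fun t => N t u)
    (hId : ∀ t, T t t = ContinuousLinearMap.id ℝ X)
    (hCoc : ∀ τ s t, τ ≤ s → s ≤ t → ∀ u, T t s (T s τ u) = T t τ u)
    (hCont : ∀ τ (u : X), ContinuousOn (fun t => T t τ u) (Ici τ))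
    (hContB : ∀ τ (u : X), ContinuousOn (fun s => T τ s u) (Iic τ))
    (hBd : ∀ τ t (u : X), τ ≤ t → N t (T t τ u) ≤ K * Real.exp (c * (t - τ)) * N τ u)
    (hK : 0 < K)
    (p q : ℝ≥0∞) (hq : 1 ≤ q) (hpq : q ≤ p)
    -- admissibility with bounded inverse `G`, in both the `L^p`- and sup-components:
    (hAdm : ∀ y : ℝ → X, MemY2 N q y → ∃ x : ℝ → X, MemY1 N p x ∧ SolvesEq T x y ∧
      famLpNorm N p x ≤ ENNReal.ofReal normG * famLpNorm N q y ∧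
      (∀ x' : ℝ → X, MemY1 N p x' → SolvesEq T x' y → x' = x))
    -- `Pr τ` is the projection onto `F^s_τ` along `F^u_τ`:
    (Pr : ℝ → X → X)
    (hPr : ∀ τ (u : X), Pr τ u ∈ Fs T N p τ ∧ u - Pr τ u ∈ Fu T N p τ) :
    ∀ τ (u : X), N τ (Pr τ u) ≤ (K ^ 2 * Real.exp (2 * c) * normG + 1) * N τ u := by
  classical
  have hp1 : 1 ≤ p := le_trans hq hpq
  have hN0 : ∀ t, N t (0 : X) = 0 := by
    intro t; have := hNsmul t 0 0; simpa using this
  have hNnn : ∀ t (x : X), 0 ≤ N t x := fun t x => le_trans (norm_nonneg x) (hN₁ t x)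
  have hNneg : ∀ t (x : X), N t (-x) = N t x := by
    intro t x; have := hNsmul t (-1) x; simpa using this
  have hNsub : ∀ t (a b : X), N t (a - b) ≤ N t a + N t b := by
    intro t a b
    have h := hNadd t a (-b)
    rw [hNneg] at h
    simpa [sub_eq_add_neg] using h
  have hlip : ∀ t (a b : X), N t a ≤ N t b + C * Real.exp (ε * |t|) * ‖a - b‖ := by
    intro t a b
    have h1 : N t a ≤ N t b + N t (a - b) := by
      have := hNadd t b (a - b); simpa using this
    exact h1.trans (add_le_add_right (hN₂ t (a - b)) _)
  intro τ u
  by_cases hC : 0 ≤ C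
  swap
  · -- `C < 0` forces the space to be trivial
    have hall : ∀ x : X, x = 0 := by
      intro x
      have h1 := (hN₁ 0 x).trans (hN₂ 0 x)
      have h2 : ‖x‖ ≤ C * ‖x‖ := by simpa using h1
      have h3 : ‖x‖ = 0 := by nlinarith [norm_nonneg x]
      exact norm_eq_zero.1 h3
    rw [hall (Pr τ u), hall u, hN0]
    simp
  -- any continuous function with vanishing `famLpNorm` is identically zero
  have solzero : ∀ x : ℝ → X, Continuous x → famLpNorm N p x = 0 → ∀ t, x t = 0 := by
    intro x hx h0
    have hF : Measurable fun t => ENNReal.ofReal (N t (x t)) :=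
      meas_ofReal_N hC hlip hNmeas hx.stronglyMeasurable
    have hae : ∀ᵐ t ∂(volume : Measure ℝ), ENNReal.ofReal (N t (x t)) = 0 := by
      rw [famLp_eq_nnLp] at h0
      unfold nnLp at h0
      split at h0
      · have h1 := ENNReal.ae_le_essSup (μ := volume) (fun t => ENNReal.ofReal (N t (x t)))
        rw [h0] at h1
        filter_upwards [h1] with t ht using le_antisymm ht zero_le
      · have hpne : p ≠ ∞ := by assumption
        have hr : 0 < p.toReal := nnLp_toReal_pos hp1 hpne
        rw [ENNReal.rpow_eq_zero_iff] at h0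
        rcases h0 with ⟨h0, -⟩ | ⟨-, hy⟩
        · have h2 := (lintegral_eq_zero_iff (hF.pow_const _)).1 h0
          filter_upwards [h2] with t ht
          simp only [Pi.zero_apply] at ht
          rw [ENNReal.rpow_eq_zero_iff] at ht
          rcases ht with ⟨ht, -⟩ | ⟨-, hr'⟩
          · exact ht
          · exact absurd hr' (not_lt.2 hr.le)
        · exact absurd hy (not_lt.2 (by positivity))
    have hxae : x =ᵐ[(volume : Measure ℝ)] (fun _ => (0 : X)) := by
      filter_upwards [hae] with t ht
      have h4 : N t (x t) ≤ 0 := ENNReal.ofReal_eq_zero.1 ht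
      have hx0 : ‖x t‖ = 0 := le_antisymm (le_trans (hN₁ t (x t)) h4) (norm_nonneg _)
      exact norm_eq_zero.1 hx0
    have hfin : x = fun _ => (0 : X) := (hx.ae_eq_iff_eq volume continuous_const).1 hxae
    exact fun t => congrFun hfin t
  by_cases hG0 : 0 ≤ normG
  swap
  · -- `normG < 0` forces the space to be trivial
    push_neg at hG0
    have hall : ∀ x : X, x = 0 := by
      intro x
      set y : ℝ → X := (Ioc (0:ℝ) 1).indicator (fun t => T t 0 x) with hy
      have hy2 : MemY2 N q y := by
        constructor
        · exact (aestronglyMeasurable_indicator_iff measurableSet_Ioc).2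
            (((hCont 0 x).mono (fun s hs => le_of_lt hs.1)).aestronglyMeasurable
              measurableSet_Ioc)
        · rw [famLp_eq_nnLp]
          refine lt_of_le_of_lt
            (nnLp_le_of_bound (A := Ioc (0:ℝ) 1) (cc := ENNReal.ofReal (K * Real.exp |c| * N 0 x)) hq
              measurableSet_Ioc (by rw [Real.volume_Ioc]; norm_num) ?_ ?_)
            ENNReal.ofReal_lt_top
          · intro t ht
            rw [hy, Set.indicator_of_mem ht]
            refine ENNReal.ofReal_le_ofReal ?_
            have h1 := hBd 0 t x ht.1.le
            have h2 : c * (t - 0) ≤ |c| := by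
              have h3 : c * (t - 0) ≤ |c * (t - 0)| := le_abs_self _
              rw [abs_mul] at h3
              have h4 : |t - 0| ≤ 1 := by
                rw [abs_of_nonneg (by linarith [ht.1])]
                linarith [ht.2]
              nlinarith [abs_nonneg c]
            have h5 : Real.exp (c * (t - 0)) ≤ Real.exp |c| := Real.exp_le_exp.2 h2
            refine h1.trans ?_
            exact mul_le_mul_of_nonneg_right
              (mul_le_mul_of_nonneg_left h5 hK.le) (hNnn 0 x)
          · intro t ht
            rw [hy, Set.indicator_of_notMem ht, hN0]
            simp
      obtain ⟨x₁, hx₁1, hx₁sol, hx₁G, -⟩ := hAdm y hy2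
      have hx₁0 : ∀ t, x₁ t = 0 := by
        refine solzero x₁ hx₁1.1 (le_antisymm ?_ zero_le)
        refine le_trans hx₁G ?_
        rw [ENNReal.ofReal_eq_zero.2 hG0.le, zero_mul]
      have hT0 : ∀ t ∈ Ioc (0:ℝ) 1, T t 0 x = 0 := by
        intro t ht
        have h := hx₁sol 0 t ht.1.le
        rw [hx₁0 t, hx₁0 0, map_zero, zero_add] at h
        have hEq : EqOn (fun s => T t s (y s)) (fun _ => T t 0 x) (Ioc 0 t) := by
          intro s hs
          have hs1 : s ∈ Ioc (0:ℝ) 1 := ⟨hs.1, le_trans hs.2 ht.2⟩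
          show T t s (y s) = T t 0 x
          rw [hy, Set.indicator_of_mem hs1]
          exact hCoc 0 s t hs.1.le hs.2 x
        rw [setIntegral_congr_fun measurableSet_Ioc hEq, setIntegral_const,
          measureReal_def, Real.volume_Ioc] at h
        rw [ENNReal.toReal_ofReal (by linarith [ht.1.le] : (0:ℝ) ≤ t - 0)] at h
        have ht0 : t - 0 ≠ 0 := by
          intro hcontra; rw [sub_zero] at hcontra; exact ht.1.ne' hcontra
        rcases smul_eq_zero.1 h.symm with h' | h'
        · exact absurd h' ht0
        · exact h'
      have hlim : Tendsto (fun t => T t 0 x) (𝓝[>] (0:ℝ)) (𝓝 x) := by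
        have h1 : ContinuousWithinAt (fun t => T t 0 x) (Ici (0:ℝ)) 0 :=
          hCont 0 x 0 Set.self_mem_Ici
        have h3 : T 0 0 x = x := by rw [hId]; rfl
        have h2 : Tendsto (fun t => T t 0 x) (𝓝[>] (0:ℝ)) (𝓝 (T 0 0 x)) :=
          h1.mono Ioi_subset_Ici_self
        rwa [h3] at h2
      have hzero : Tendsto (fun t => T t 0 x) (𝓝[>] (0:ℝ)) (𝓝 (0 : X)) := by
        refine Tendsto.congr' ?_ tendsto_const_nhds
        filter_upwards [Ioc_mem_nhdsGT_of_mem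
          (⟨le_refl (0:ℝ), zero_lt_one⟩ : (0:ℝ) ∈ Ico (0:ℝ) 1)] with t ht
        exact (hT0 t ht).symm
      exact tendsto_nhds_unique hlim hzero
    rw [hall (Pr τ u), hall u, hN0]
    simp
  by_cases hc : 0 ≤ c
  swap
  · -- `c < 0`: the unstable space is trivial and `Pr τ u = u`
    push_neg at hc
    obtain ⟨-, hw⟩ := hPr τ u
    obtain ⟨φw, hφτ, hφtraj, ⟨Mw, hMw⟩, -⟩ := hw
    have hMw0 : 0 ≤ Mw := le_trans (hNnn τ (φw τ)) (hMw τ le_rfl)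
    have hineq : ∀ s, s ≤ τ → N τ (u - Pr τ u) ≤ K * Mw * Real.exp (c * (τ - s)) := by
      intro s hs
      have h1 : u - Pr τ u = T τ s (φw s) := by rw [← hφτ]; exact hφtraj s τ hs le_rfl
      rw [h1]
      calc N τ (T τ s (φw s)) ≤ K * Real.exp (c * (τ - s)) * N s (φw s) := hBd s τ (φw s) hs
        _ ≤ K * Real.exp (c * (τ - s)) * Mw :=
            mul_le_mul_of_nonneg_left (hMw s hs)
              (mul_nonneg hK.le (Real.exp_pos _).le)
        _ = K * Mw * Real.exp (c * (τ - s)) := by ring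
    have hlim : Tendsto (fun s => K * Mw * Real.exp (c * (τ - s))) atBot (𝓝 0) := by
      have h2 : Tendsto (fun s : ℝ => (-c) * s) atBot atBot :=
        (tendsto_const_mul_atBot_of_pos (f := fun s : ℝ => s)
          (by linarith : (0:ℝ) < -c)).2 tendsto_id
      have h3 := tendsto_atBot_add_const_left atBot (c * τ) h2
      have h1 : Tendsto (fun s : ℝ => c * (τ - s)) atBot atBot :=
        h3.congr (fun s => by ring)
      have h4 := Real.tendsto_exp_atBot.comp h1
      have h5 := h4.const_mul (K * Mw)
      simpa using h5
    have hle : N τ (u - Pr τ u) ≤ 0 :=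
      ge_of_tendsto hlim (eventually_atBot.2 ⟨τ, fun s hs => hineq s hs⟩)
    have h0 : u - Pr τ u = 0 := by
      have h6 := le_trans (hN₁ τ _) hle
      exact norm_le_zero_iff.1 h6
    have hPrEq : Pr τ u = u := (sub_eq_zero.1 h0).symm
    rw [hPrEq]
    have hcoef : 0 ≤ K ^ 2 * Real.exp (2 * c) * normG := mul_nonneg (by positivity) hG0
    nlinarith [hNnn τ u]
  -- ============ main case : 0 ≤ c, 0 ≤ normG, 0 ≤ C ============
  have ite_eqI : ∀ h : ℝ → X, (fun t => if τ ≤ t then h t else 0) = (Ici τ).indicator h := by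
    intro h; funext t; rw [Set.indicator_apply]; simp [mem_Ici]
  have ite_eqS : ∀ h : ℝ → X, (fun t => if t ≤ τ then h t else 0) = (Iic τ).indicator h := by
    intro h; funext t; rw [Set.indicator_apply]; simp [mem_Iic]
  have famLp_I : ∀ h : ℝ → X, famLpNorm N p (fun t => if τ ≤ t then h t else 0)
      = nnLp p (fun t => ENNReal.ofReal (N t ((Ici τ).indicator h t))) := by
    intro h
    rw [ite_eqI, famLp_eq_nnLp]
  have famLp_S : ∀ h : ℝ → X, famLpNorm N p (fun t => if t ≤ τ then h t else 0)
      = nnLp p (fun t => ENNReal.ofReal (N t ((Iic τ).indicator h t))) := by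
    intro h
    rw [ite_eqS, famLp_eq_nnLp]
  set g : ℝ → X := (Ioc τ (τ + 1)).indicator (fun t => T t τ u) with hgdef
  have hvolIoc : volume (Ioc τ (τ + 1)) = 1 := by
    rw [Real.volume_Ioc]; norm_num
  have hvolIcc : volume (Icc (τ - 1) τ) = 1 := by
    rw [Real.volume_Icc]; norm_num
  have hBd1 : ∀ t ∈ Ioc τ (τ + 1), N t (T t τ u) ≤ K * Real.exp c * N τ u := by
    intro t ht
    have h1 := hBd τ t u ht.1.le
    have h2 : Real.exp (c * (t - τ)) ≤ Real.exp c := by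
      apply Real.exp_le_exp.2
      nlinarith [ht.1.le, ht.2]
    exact h1.trans (mul_le_mul_of_nonneg_right
      (mul_le_mul_of_nonneg_left h2 hK.le) (hNnn τ u))
  have hgbound : famLpNorm N q g ≤ ENNReal.ofReal (K * Real.exp c * N τ u) := by
    rw [famLp_eq_nnLp]
    refine nnLp_le_of_bound (A := Ioc τ (τ + 1)) hq measurableSet_Ioc hvolIoc ?_ ?_
    · intro t ht
      rw [hgdef, Set.indicator_of_mem ht]
      exact ENNReal.ofReal_le_ofReal (hBd1 t ht)
    · intro t ht
      rw [hgdef, Set.indicator_of_notMem ht, hN0]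
      simp
  have hg2 : MemY2 N q g := by
    constructor
    · exact (aestronglyMeasurable_indicator_iff measurableSet_Ioc).2
        (((hCont τ u).mono (fun s hs => hs.1.le)).aestronglyMeasurable measurableSet_Ioc)
    · exact lt_of_le_of_lt hgbound ENNReal.ofReal_lt_top
  obtain ⟨v, hv1, hvsol, hvG, -⟩ := hAdm g hg2
  obtain ⟨hvc, ⟨Mv, hMv⟩, hvLp⟩ := hv1
  have hback : ∀ s t : ℝ, s ≤ t → t ≤ τ → v t = T t s (v s) := by
    intro s t hst htτ
    have h := hvsol s t hst
    have hEq : EqOn (fun x => T t x (g x)) (fun _ => (0:X)) (Ioc s t) := by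
      intro x hx
      have hnm : x ∉ Ioc τ (τ + 1) := fun hmem =>
        absurd hmem.1 (not_lt.2 (le_trans hx.2 htτ))
      show T t x (g x) = 0
      rw [hgdef, Set.indicator_of_notMem hnm, map_zero]
    rw [setIntegral_congr_fun measurableSet_Ioc hEq, integral_zero, add_zero] at h
    exact h
  have hKe : (0:ℝ) < K * Real.exp c := by positivity
  have hvlow : ∀ t ∈ Icc (τ - 1) τ, N τ (v τ) ≤ K * Real.exp c * N t (v t) := by
    intro t ht
    have h1 : v τ = T τ t (v t) := hback t τ ht.2 le_rfl
    rw [h1]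
    have h2 := hBd t τ (v t) ht.2
    have h3 : Real.exp (c * (τ - t)) ≤ Real.exp c := by
      apply Real.exp_le_exp.2
      nlinarith [ht.1]
    exact h2.trans (mul_le_mul_of_nonneg_right
      (mul_le_mul_of_nonneg_left h3 hK.le) (hNnn t (v t)))
  have hlow : ENNReal.ofReal (N τ (v τ) / (K * Real.exp c)) ≤ famLpNorm N p v := by
    rw [famLp_eq_nnLp]
    refine nnLp_le_of_lower_bound hp1 measurableSet_Icc hvolIcc ?_
    intro t ht
    refine ENNReal.ofReal_le_ofReal ?_
    rw [div_le_iff₀ hKe]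
    calc N τ (v τ) ≤ K * Real.exp c * N t (v t) := hvlow t ht
      _ = N t (v t) * (K * Real.exp c) := by ring
  have hvτbound : N τ (v τ) ≤ K ^ 2 * Real.exp (2 * c) * normG * N τ u := by
    have hchain : ENNReal.ofReal (N τ (v τ) / (K * Real.exp c)) ≤
        ENNReal.ofReal (normG * (K * Real.exp c * N τ u)) := by
      refine hlow.trans (hvG.trans ?_)
      rw [ENNReal.ofReal_mul hG0]
      exact mul_le_mul_right hgbound _
    have hrhs : (0:ℝ) ≤ normG * (K * Real.exp c * N τ u) :=
      mul_nonneg hG0 (mul_nonneg hKe.le (hNnn τ u))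
    have h := (ENNReal.ofReal_le_ofReal_iff hrhs).1 hchain
    rw [div_le_iff₀ hKe] at h
    have hexp : Real.exp (2 * c) = Real.exp c * Real.exp c := by
      rw [two_mul, Real.exp_add]
    calc N τ (v τ) ≤ normG * (K * Real.exp c * N τ u) * (K * Real.exp c) := h
      _ = K ^ 2 * (Real.exp c * Real.exp c) * normG * N τ u := by ring
      _ = K ^ 2 * Real.exp (2 * c) * normG * N τ u := by rw [hexp]
  have hfwd : ∀ t, τ + 1 ≤ t → v t = T t τ (v τ) + T t τ u := by
    intro t ht
    have h := hvsol τ t (by linarith)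
    have hEq : EqOn (fun s => T t s (g s))
        ((Ioc τ (τ + 1)).indicator (fun _ => T t τ u)) (Ioc τ t) := by
      intro s hs
      by_cases hmem : s ∈ Ioc τ (τ + 1)
      · rw [Set.indicator_of_mem hmem]
        show T t s (g s) = T t τ u
        rw [hgdef, Set.indicator_of_mem hmem]
        exact hCoc τ s t hmem.1.le (le_trans hmem.2 ht) u
      · rw [Set.indicator_of_notMem hmem]
        show T t s (g s) = 0
        rw [hgdef, Set.indicator_of_notMem hmem, map_zero]
    rw [setIntegral_congr_fun measurableSet_Ioc hEq,
      setIntegral_indicator measurableSet_Ioc, Set.Ioc_inter_Ioc, sup_idem,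
      inf_eq_right.2 ht, setIntegral_const, measureReal_def, hvolIoc, ENNReal.toReal_one, one_smul] at h
    exact h
  set s' : X := u + v τ with hs'def
  have hfwd' : ∀ t, τ + 1 ≤ t → T t τ s' = v t := by
    intro t ht
    rw [hs'def, map_add, hfwd t ht]
    abel
  have hbnds' : ∀ t, τ ≤ t → N t (T t τ s') ≤ max (K * Real.exp c * N τ s') Mv := by
    intro t ht
    by_cases h1 : t ≤ τ + 1
    · refine le_trans ?_ (le_max_left _ _)
      have h2 := hBd τ t s' ht
      have h3 : Real.exp (c * (t - τ)) ≤ Real.exp c := by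
        apply Real.exp_le_exp.2; nlinarith
      exact h2.trans (mul_le_mul_of_nonneg_right
        (mul_le_mul_of_nonneg_left h3 hK.le) (hNnn τ s'))
    · push_neg at h1
      rw [hfwd' t h1.le]
      exact le_trans (hMv t) (le_max_right _ _)
  have hs'Lp : famLpNorm N p (fun t => if τ ≤ t then T t τ s' else 0) < ∞ := by
    rw [famLp_I]
    set F₁ : ℝ → ℝ≥0∞ := fun t => ENNReal.ofReal (N t ((Ici (τ+1)).indicator v t)) with hF₁
    set F₂ : ℝ → ℝ≥0∞ :=
      (Icc τ (τ+1)).indicator (fun _ => ENNReal.ofReal (K * Real.exp c * N τ s')) with hF₂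
    have hpt : ∀ t,
        ENNReal.ofReal (N t ((Ici τ).indicator (fun t => T t τ s') t)) ≤ F₁ t + F₂ t := by
      intro t
      by_cases h1 : τ ≤ t
      · rw [Set.indicator_of_mem (mem_Ici.2 h1)]
        by_cases h2 : t ≤ τ + 1
        · refine le_trans ?_ (self_le_add_left _ _)
          have hFeq : F₂ t = ENNReal.ofReal (K * Real.exp c * N τ s') := by
            simp only [hF₂]
            rw [Set.indicator_of_mem (mem_Icc.2 ⟨h1, h2⟩)]
          rw [hFeq]
          refine ENNReal.ofReal_le_ofReal ?_
          have h3 := hBd τ t s' h1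
          have h4 : Real.exp (c * (t - τ)) ≤ Real.exp c := by
            apply Real.exp_le_exp.2; nlinarith
          exact h3.trans (mul_le_mul_of_nonneg_right
            (mul_le_mul_of_nonneg_left h4 hK.le) (hNnn τ s'))
        · push_neg at h2
          refine le_trans ?_ (self_le_add_right _ _)
          rw [hfwd' t h2.le]
          have hFeq : F₁ t = ENNReal.ofReal (N t (v t)) := by
            simp only [hF₁]
            rw [Set.indicator_of_mem (mem_Ici.2 h2.le)]
          rw [hFeq]
      · rw [Set.indicator_of_notMem (by simpa [mem_Ici] using h1), hN0]
        simp
    have hmeas₁ : AEMeasurable F₁ volume :=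
      aemeas_ofReal_N hC hlip hNmeas measurableSet_Ici hvc.continuousOn
    have hmeas₂ : AEMeasurable F₂ volume :=
      (measurable_const.indicator measurableSet_Icc).aemeasurable
    have hF₁fin : nnLp p F₁ < ∞ := by
      refine lt_of_le_of_lt (nnLp_mono (G := fun t => ENNReal.ofReal (N t (v t))) ?_) ?_
      · intro t
        simp only [hF₁]
        by_cases ht : t ∈ Ici (τ+1)
        · rw [Set.indicator_of_mem ht]
        · rw [Set.indicator_of_notMem ht, hN0]; simp
      · rw [← famLp_eq_nnLp]; exact hvLp
    have hF₂fin : nnLp p F₂ < ∞ := by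
      refine lt_of_le_of_lt (nnLp_le_of_bound (A := Icc τ (τ+1))
        (cc := ENNReal.ofReal (K * Real.exp c * N τ s')) hp1 measurableSet_Icc
        (by rw [Real.volume_Icc]; norm_num) ?_ ?_) ENNReal.ofReal_lt_top
      · intro t ht; rw [hF₂, Set.indicator_of_mem ht]
      · intro t ht; rw [hF₂, Set.indicator_of_notMem ht]
    calc nnLp p (fun t => ENNReal.ofReal (N t ((Ici τ).indicator (fun t => T t τ s') t)))
        ≤ nnLp p (fun t => F₁ t + F₂ t) := nnLp_mono hpt
      _ ≤ nnLp p F₁ + nnLp p F₂ := nnLp_add_le hp1 hmeas₁ hmeas₂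
      _ < ∞ := ENNReal.add_lt_top.2 ⟨hF₁fin, hF₂fin⟩
  have hs'Fs : s' ∈ Fs T N p τ :=
    ⟨⟨max (K * Real.exp c * N τ s') Mv, hbnds'⟩, hs'Lp⟩
  obtain ⟨hsFs, hwFu⟩ := hPr τ u
  obtain ⟨⟨Ms, hMs⟩, hsLp⟩ := hsFs
  obtain ⟨φw, hφwτ, hφwtraj, ⟨Mw, hMw⟩, hφwLp⟩ := hwFu
  have hφwc : ContinuousOn φw (Iic τ) := backward_continuousOn hCont hφwtraj
  set z : X := Pr τ u - s' with hzdef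
  have hzbnd : ∀ t, τ ≤ t → N t (T t τ z) ≤ Ms + max (K * Real.exp c * N τ s') Mv := by
    intro t ht
    rw [hzdef, map_sub]
    exact (hNsub t _ _).trans (add_le_add (hMs t ht) (hbnds' t ht))
  have hzLpFs : famLpNorm N p (fun t => if τ ≤ t then T t τ z else 0) < ∞ := by
    rw [famLp_I]
    set F₁ : ℝ → ℝ≥0∞ :=
      fun t => ENNReal.ofReal (N t ((Ici τ).indicator (fun t => T t τ (Pr τ u)) t)) with hF₁
    set F₂ : ℝ → ℝ≥0∞ :=
      fun t => ENNReal.ofReal (N t ((Ici τ).indicator (fun t => T t τ s') t)) with hF₂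
    have hpt : ∀ t,
        ENNReal.ofReal (N t ((Ici τ).indicator (fun t => T t τ z) t)) ≤ F₁ t + F₂ t := by
      intro t
      by_cases h1 : t ∈ Ici τ
      · rw [Set.indicator_of_mem h1, hzdef, map_sub]
        have hFeq1 : F₁ t = ENNReal.ofReal (N t (T t τ (Pr τ u))) := by
          simp only [hF₁]
          rw [Set.indicator_of_mem h1]
        have hFeq2 : F₂ t = ENNReal.ofReal (N t (T t τ s')) := by
          simp only [hF₂]
          rw [Set.indicator_of_mem h1]
        rw [hFeq1, hFeq2]
        exact le_trans (ENNReal.ofReal_le_ofReal (hNsub t _ _)) ENNReal.ofReal_add_le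
      · rw [Set.indicator_of_notMem h1, hN0]; simp
    have hmeas₁ : AEMeasurable F₁ volume :=
      aemeas_ofReal_N hC hlip hNmeas measurableSet_Ici (hCont τ (Pr τ u))
    have hmeas₂ : AEMeasurable F₂ volume :=
      aemeas_ofReal_N hC hlip hNmeas measurableSet_Ici (hCont τ s')
    calc nnLp p (fun t => ENNReal.ofReal (N t ((Ici τ).indicator (fun t => T t τ z) t)))
        ≤ nnLp p (fun t => F₁ t + F₂ t) := nnLp_mono hpt
      _ ≤ nnLp p F₁ + nnLp p F₂ := nnLp_add_le hp1 hmeas₁ hmeas₂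
      _ < ∞ := by
          refine ENNReal.add_lt_top.2 ⟨?_, ?_⟩
          · rw [hF₁, ← famLp_I]; exact hsLp
          · rw [hF₂, ← famLp_I]; exact hs'Lp
  set φz : ℝ → X := fun t => -v t - φw t with hφzdef
  have hφzτ : φz τ = z := by
    show -v τ - φw τ = z
    rw [hφwτ, hzdef, hs'def]
    abel
  have hφztraj : ∀ s t, s ≤ t → t ≤ τ → φz t = T t s (φz s) := by
    intro s t hst htτ
    show -v t - φw t = T t s (-v s - φw s)
    rw [hback s t hst htτ, hφwtraj s t hst htτ, map_sub, map_neg]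
  have hφzbnd : ∀ t, t ≤ τ → N t (φz t) ≤ Mv + Mw := by
    intro t ht
    refine (hNsub t _ _).trans (add_le_add ?_ (hMw t ht))
    rw [hNneg]; exact hMv t
  have hφzLp : famLpNorm N p (fun t => if t ≤ τ then φz t else 0) < ∞ := by
    rw [famLp_S]
    set F₁ : ℝ → ℝ≥0∞ :=
      fun t => ENNReal.ofReal (N t ((Iic τ).indicator v t)) with hF₁
    set F₂ : ℝ → ℝ≥0∞ :=
      fun t => ENNReal.ofReal (N t ((Iic τ).indicator φw t)) with hF₂
    have hpt : ∀ t, ENNReal.ofReal (N t ((Iic τ).indicator φz t)) ≤ F₁ t + F₂ t := by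
      intro t
      by_cases h1 : t ∈ Iic τ
      · rw [Set.indicator_of_mem h1]
        have hFeq1 : F₁ t = ENNReal.ofReal (N t (v t)) := by
          simp only [hF₁]
          rw [Set.indicator_of_mem h1]
        have hFeq2 : F₂ t = ENNReal.ofReal (N t (φw t)) := by
          simp only [hF₂]
          rw [Set.indicator_of_mem h1]
        rw [hFeq1, hFeq2]
        refine le_trans (ENNReal.ofReal_le_ofReal ?_) ENNReal.ofReal_add_le
        show N t (-v t - φw t) ≤ N t (v t) + N t (φw t)
        have := hNsub t (-v t) (φw t)
        rw [hNneg] at this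
        exact this
      · rw [Set.indicator_of_notMem h1, hN0]; simp
    have hmeas₁ : AEMeasurable F₁ volume :=
      aemeas_ofReal_N hC hlip hNmeas measurableSet_Iic hvc.continuousOn
    have hmeas₂ : AEMeasurable F₂ volume :=
      aemeas_ofReal_N hC hlip hNmeas measurableSet_Iic hφwc
    calc nnLp p (fun t => ENNReal.ofReal (N t ((Iic τ).indicator φz t)))
        ≤ nnLp p (fun t => F₁ t + F₂ t) := nnLp_mono hpt
      _ ≤ nnLp p F₁ + nnLp p F₂ := nnLp_add_le hp1 hmeas₁ hmeas₂
      _ < ∞ := by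
          refine ENNReal.add_lt_top.2 ⟨?_, ?_⟩
          · refine lt_of_le_of_lt
              (nnLp_mono (G := fun t => ENNReal.ofReal (N t (v t))) ?_) ?_
            · intro t
              simp only [hF₁]
              by_cases ht : t ∈ Iic τ
              · rw [Set.indicator_of_mem ht]
              · rw [Set.indicator_of_notMem ht, hN0]; simp
            · rw [← famLp_eq_nnLp]; exact hvLp
          · rw [hF₂, ← famLp_S]; exact hφwLp
  set ζ : ℝ → X := fun t => if t ≤ τ then φz t else T t τ z with hζdef
  have hζc : Continuous ζ := by
    refine glue_continuous ((hvc.continuousOn.neg).sub hφwc) (hCont τ z) ?_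
    show φz τ = T τ τ z
    rw [hφzτ, hId]
    rfl
  have hζbnd : ∃ M, ∀ t, N t (ζ t) ≤ M := by
    refine ⟨max (Mv + Mw) (Ms + max (K * Real.exp c * N τ s') Mv), fun t => ?_⟩
    show N t (if t ≤ τ then φz t else T t τ z) ≤ _
    by_cases ht : t ≤ τ
    · rw [if_pos ht]; exact le_trans (hφzbnd t ht) (le_max_left _ _)
    · rw [if_neg ht]
      exact le_trans (hzbnd t (le_of_not_ge ht)) (le_max_right _ _)
  have hζLp : famLpNorm N p ζ < ∞ := by
    rw [famLp_eq_nnLp]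
    set F₁ : ℝ → ℝ≥0∞ := fun t => ENNReal.ofReal (N t ((Iic τ).indicator φz t)) with hF₁
    set F₂ : ℝ → ℝ≥0∞ :=
      fun t => ENNReal.ofReal (N t ((Ici τ).indicator (fun t => T t τ z) t)) with hF₂
    have hpt : ∀ t, ENNReal.ofReal (N t (ζ t)) ≤ F₁ t + F₂ t := by
      intro t
      show ENNReal.ofReal (N t (if t ≤ τ then φz t else T t τ z)) ≤ _
      by_cases ht : t ≤ τ
      · rw [if_pos ht]
        refine le_trans ?_ (self_le_add_right _ _)
        have hFeq : F₁ t = ENNReal.ofReal (N t (φz t)) := by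
          simp only [hF₁]
          rw [Set.indicator_of_mem (mem_Iic.2 ht)]
        rw [hFeq]
      · rw [if_neg ht]
        refine le_trans ?_ (self_le_add_left _ _)
        have hFeq : F₂ t = ENNReal.ofReal (N t (T t τ z)) := by
          simp only [hF₂]
          rw [Set.indicator_of_mem (mem_Ici.2 (le_of_not_ge ht))]
        rw [hFeq]
    have hmeas₁ : AEMeasurable F₁ volume :=
      aemeas_ofReal_N hC hlip hNmeas measurableSet_Iic ((hvc.continuousOn.neg).sub hφwc)
    have hmeas₂ : AEMeasurable F₂ volume :=
      aemeas_ofReal_N hC hlip hNmeas measurableSet_Ici (hCont τ z)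
    calc nnLp p (fun t => ENNReal.ofReal (N t (ζ t)))
        ≤ nnLp p (fun t => F₁ t + F₂ t) := nnLp_mono hpt
      _ ≤ nnLp p F₁ + nnLp p F₂ := nnLp_add_le hp1 hmeas₁ hmeas₂
      _ < ∞ := by
          refine ENNReal.add_lt_top.2 ⟨?_, ?_⟩
          · rw [hF₁, ← famLp_S]; exact hφzLp
          · rw [hF₂, ← famLp_I]; exact hzLpFs
  have hy0 : MemY2 N q (fun _ => (0:X)) := by
    constructor
    · exact aestronglyMeasurable_const
    · rw [famLp_eq_nnLp]
      have hz : (fun t => ENNReal.ofReal (N t ((fun _ => (0:X)) t))) = fun _ => 0 := by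
        funext t; rw [hN0]; simp
      rw [hz, nnLp_zero hq]
      simp
  obtain ⟨x₀, hx₀1, hx₀sol, -, hx₀uniq⟩ := hAdm (fun _ => (0:X)) hy0
  have hζsol : SolvesEq T ζ (fun _ => (0:X)) := by
    intro σ t hσt
    have hzero : ∫ s in Ioc σ t, T t s ((fun _ => (0:X)) s) = 0 := by
      simp
    rw [hzero, add_zero]
    show (if t ≤ τ then φz t else T t τ z) = T t σ (if σ ≤ τ then φz σ else T σ τ z)
    by_cases h1 : t ≤ τ
    · rw [if_pos h1, if_pos (le_trans hσt h1)]
      exact hφztraj σ t hσt h1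
    · rw [if_neg h1]
      by_cases h2 : σ ≤ τ
      · rw [if_pos h2]
        have h3 : T t τ z = T t τ (φz τ) := by rw [hφzτ]
        rw [h3, hφztraj σ τ h2 le_rfl]
        exact hCoc σ τ t h2 (le_of_not_ge h1) (φz σ)
      · rw [if_neg h2]
        exact (hCoc τ σ t (le_of_not_ge h2) hσt z).symm
  have hζ1 : MemY1 N p ζ := ⟨hζc, hζbnd, hζLp⟩
  have h01 : MemY1 N p (fun _ => (0:X)) := by
    refine ⟨continuous_const, ⟨0, fun t => le_of_eq (hN0 t)⟩, ?_⟩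
    rw [famLp_eq_nnLp]
    have hz : (fun t => ENNReal.ofReal (N t ((fun _ => (0:X)) t))) = fun _ => 0 := by
      funext t; rw [hN0]; simp
    rw [hz, nnLp_zero hp1]
    simp
  have h0sol : SolvesEq T (fun _ => (0:X)) (fun _ => (0:X)) := by
    intro σ t hσt
    simp
  have hζeq : ζ = x₀ := hx₀uniq ζ hζ1 hζsol
  have h0eq : (fun _ => (0:X)) = x₀ := hx₀uniq _ h01 h0sol
  have hz0 : z = (0:X) := by
    have h1 := congrFun (hζeq.trans h0eq.symm) τ
    have h2 : ζ τ = z := by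
      show (if τ ≤ τ then φz τ else T τ τ z) = z
      rw [if_pos le_rfl, hφzτ]
    rw [h2] at h1
    exact h1
  have hPrEq : Pr τ u = u + v τ := by
    have h1 : Pr τ u - s' = (0:X) := by rw [← hzdef]; exact hz0
    exact (sub_eq_zero.1 h1).trans hs'def
  rw [hPrEq]
  calc N τ (u + v τ) ≤ N τ u + N τ (v τ) := hNadd τ u (v τ)
    _ ≤ N τ u + K ^ 2 * Real.exp (2 * c) * normG * N τ u := by linarith [hvτbound]
    _ = (K ^ 2 * Real.exp (2 * c) * normG + 1) * N τ u := by ring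
end

section
/- In the admissibility setting, there exists C' > 0 (namely C' = 2Ke^c‖G‖) such that ‖x‖_τ ≤ C'‖T(t,τ)x‖_t for all t ≥ τ and all x ∈ F^u_τ. -/
open MeasureTheory Set Filter
open scoped ENNReal

set_option maxHeartbeats 2000000

/-- In the admissibility setting (the solution operator `G` is bounded,
with `‖Gy‖_∞ ≤ normG · ‖y‖_q`), one has
`‖u‖_τ ≤ 2 K e^c normG · ‖T t τ u‖_t` for all `t ≥ τ` and `u ∈ F^u_τ`. -/
theorem unstable_lower_bound
    {X : Type*} [NormedAddCommGroup X] [NormedSpace ℝ X] [CompleteSpace X]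
    (T : ℝ → ℝ → X →L[ℝ] X) (N : ℝ → X → ℝ) (C ε K c normG : ℝ)
    (hN₁ : ∀ t u, ‖u‖ ≤ N t u)
    (hN₂ : ∀ t (u : X), N t u ≤ C * Real.exp (ε * |t|) * ‖u‖)
    (hNadd : ∀ t (u v : X), N t (u + v) ≤ N t u + N t v)
    (hNsmul : ∀ t (r : ℝ) (u : X), N t (r • u) = |r| * N t u)
    (hNmeas : ∀ u : X, Measurable fun t => N t u)
    (hId : ∀ t, T t t = ContinuousLinearMap.id ℝ X)
    (hCoc : ∀ τ s t, τ ≤ s → s ≤ t → ∀ u, T t s (T s τ u) = T t τ u)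
    (hCont : ∀ τ (u : X), ContinuousOn (fun t => T t τ u) (Ici τ))
    (hContB : ∀ τ (u : X), ContinuousOn (fun s => T τ s u) (Iic τ))
    (hBd : ∀ τ t (u : X), τ ≤ t → N t (T t τ u) ≤ K * Real.exp (c * (t - τ)) * N τ u)
    (hK : 0 < K)
    (p q : ℝ≥0∞) (hq : 1 ≤ q) (hpq : q ≤ p)
    -- boundedness of the solution operator `G` in the sup-norm:
    (hG : ∀ x y : ℝ → X, MemY1 N p x → MemY2 N q y → SolvesEq T x y →
      ∀ s, N s (x s) ≤ normG * (famLpNorm N q y).toReal) :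
    ∀ τ t (u : X), τ ≤ t → u ∈ Fu T N p τ →
      N τ u ≤ 2 * K * Real.exp c * normG * N t (T t τ u) := by
  intro τ t u htτ hu
  obtain ⟨φ, hφτ, hφT, ⟨M, hM⟩, hφLp⟩ := hu
  have hN0 : ∀ s (v : X), 0 ≤ N s v := fun s v => le_trans (norm_nonneg v) (hN₁ s v)
  have hNzero : ∀ s, N s (0 : X) = 0 := by
    intro s
    have := hNsmul s 0 0
    simpa using this
  have hNneg : ∀ s (v : X), N s (-v) = N s v := by
    intro s v
    have := hNsmul s (-1) v
    simpa using this
  -- the full trajectory through `u`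
  set w : ℝ → X := fun ξ => if ξ ≤ τ then φ ξ else T ξ τ u with hw_def
  have hwτ : w τ = u := by simp [hw_def, hφτ]
  have hw : ∀ a b : ℝ, a ≤ b → w b = T b a (w a) := by
    intro a b hab
    by_cases hb : b ≤ τ
    · have ha : a ≤ τ := hab.trans hb
      simp only [hw_def, if_pos hb, if_pos ha]
      exact hφT a b hab hb
    · push_neg at hb
      by_cases ha : a ≤ τ
      · simp only [hw_def, if_neg (not_le.mpr hb), if_pos ha]
        have h1 : φ τ = T τ a (φ a) := hφT a τ ha le_rfl
        rw [← hCoc a τ b ha hb.le (φ a), ← h1, hφτ]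
      · push_neg at ha
        simp only [hw_def, if_neg (not_le.mpr hb), if_neg (not_le.mpr ha)]
        rw [← hCoc τ a b ha.le hab u]
  have hwt : w t = T t τ u := by
    by_cases httau : t ≤ τ
    · have : t = τ := le_antisymm httau htτ
      subst this
      simp [hw_def, hφτ, hId]
    · simp [hw_def, if_neg httau]
  have hwcont : Continuous w := by
    rw [continuous_iff_continuousAt]
    intro ξ₀
    have hmem : Ici (ξ₀ - 1) ∈ nhds ξ₀ := Ici_mem_nhds (by linarith)
    have hca : ContinuousAt (fun ξ => T ξ (ξ₀ - 1) (w (ξ₀ - 1))) ξ₀ :=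
      (hCont (ξ₀ - 1) (w (ξ₀ - 1))).continuousAt hmem
    refine hca.congr ?_
    filter_upwards [hmem] with ξ hξ
    exact (hw (ξ₀ - 1) ξ hξ).symm
  -- constants
  set B : ℝ := N t (T t τ u) with hB_def
  have hB0 : 0 ≤ B := hN0 t _
  set L : ℝ := if c < 0 then 2 + 2 / c ^ 2 else 1 with hL_def
  have hL1 : 1 ≤ L := by
    rw [hL_def]
    split_ifs with hc
    · have hc2 : 0 < c ^ 2 := by nlinarith
      have : 0 ≤ 2 / c ^ 2 := (div_pos two_pos hc2).le
      linarith
    · exact le_rfl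
  have hL0 : 0 < L := lt_of_lt_of_le one_pos hL1
  set Z : ℝ := ∫ ξ in Ioc t (t + L), Real.exp (-c * (ξ - t)) with hZ_def
  have hint : IntegrableOn (fun ξ => Real.exp (-c * (ξ - t))) (Ioc t (t + L)) volume := by
    apply Continuous.integrableOn_Ioc
    continuity
  have hZge : ∀ a b : ℝ, t ≤ a → a ≤ b → b ≤ t + L → ∀ m : ℝ,
      (∀ ξ ∈ Ioc a b, m ≤ Real.exp (-c * (ξ - t))) → (b - a) * m ≤ Z := by
    intro a b hta hab hbt m hm
    have hsub : Ioc a b ⊆ Ioc t (t + L) := Ioc_subset_Ioc hta hbt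
    have hint' : IntegrableOn (fun ξ => Real.exp (-c * (ξ - t))) (Ioc a b) volume :=
      hint.mono_set hsub
    have h2 : (∫ (_ : ℝ) in Ioc a b, m) = (b - a) * m := by
      rw [setIntegral_const]
      simp [Real.volume_Ioc, ENNReal.toReal_ofReal (by linarith : (0:ℝ) ≤ b - a), hab]
    calc (b - a) * m = ∫ (_ : ℝ) in Ioc a b, m := h2.symm
      _ ≤ ∫ ξ in Ioc a b, Real.exp (-c * (ξ - t)) := by
          exact setIntegral_mono_on (integrableOn_const (by simp [Real.volume_Ioc]) (by simp)) hint'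
            measurableSet_Ioc hm
      _ ≤ Z := by
          rw [hZ_def]
          exact setIntegral_mono_set hint
            (Filter.Eventually.of_forall (fun ξ => (Real.exp_pos _).le))
            (HasSubset.Subset.eventuallyLE hsub)
  have hZpos : 0 < Z := by
    have h := hZge t (t + L) le_rfl (by linarith) le_rfl (Real.exp (-(|c| * L))) ?_
    · have := Real.exp_pos (-(|c| * L))
      nlinarith
    · intro ξ hξ
      apply Real.exp_le_exp.2
      obtain ⟨h1, h2⟩ := hξ
      nlinarith [le_abs_self c, abs_nonneg c, neg_abs_le c]
  have hZkey : L ≤ 2 * Real.exp c * Z := by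
    by_cases hc : c < 0
    · have hLeq : L = 2 + 2 / c ^ 2 := by rw [hL_def, if_pos hc]
      have hcne : c ≠ 0 := ne_of_lt hc
      have h := hZge (t + L - 1) (t + L) (by linarith) (by linarith) le_rfl
        (Real.exp (-c * (L - 1))) ?_
      · have hm : Real.exp (-c * (L - 1)) ≤ Z := by
          have : (t + L - (t + L - 1)) = 1 := by ring
          nlinarith [h]
        have hprod : Real.exp c * Real.exp (-c * (L - 1)) = Real.exp (-2 / c) := by
          rw [← Real.exp_add]
          congr 1
          rw [hLeq]
          field_simp
          ring
        have h1 : (-1 / c) + 1 ≤ Real.exp (-1 / c) := Real.add_one_le_exp _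
        have h2 : Real.exp (-2 / c) = Real.exp (-1 / c) * Real.exp (-1 / c) := by
          rw [← Real.exp_add]
          congr 1
          ring
        have h3 : L ≤ 2 * Real.exp (-2 / c) := by
          rw [hLeq, h2]
          set d : ℝ := -1 / c with hd_def
          have hd : 0 < d := div_pos_of_neg_of_neg (by norm_num) hc
          have h1' : 1 + d ≤ Real.exp d := by
            have := Real.add_one_le_exp d
            linarith
          have hd1 : (0:ℝ) ≤ 1 + d := by linarith
          have key : (1 + d) * (1 + d) ≤ Real.exp d * Real.exp d :=
            mul_le_mul h1' h1' hd1 (Real.exp_pos d).le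
          have hdd : 2 / c ^ 2 = 2 * (d * d) := by
            rw [hd_def]
            field_simp
          nlinarith [key, hdd, hd]
        have he : 0 < Real.exp c := Real.exp_pos c
        have hmul : Real.exp c * Real.exp (-c * (L - 1)) ≤ Real.exp c * Z :=
          mul_le_mul_of_nonneg_left hm he.le
        rw [hprod] at hmul
        linarith [h3, hmul]
      · intro ξ hξ
        apply Real.exp_le_exp.2
        obtain ⟨h1, h2⟩ := hξ
        nlinarith
    · have hLeq : L = 1 := by rw [hL_def, if_neg hc]
      push_neg at hc
      have h := hZge t (t + L) le_rfl (by linarith) le_rfl (Real.exp (-c)) ?_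
      · have he : 0 < Real.exp c := Real.exp_pos c
        have hee : Real.exp c * Real.exp (-c) = 1 := by
          rw [← Real.exp_add]; simp
        nlinarith [h]
      · intro ξ hξ
        apply Real.exp_le_exp.2
        obtain ⟨h1, h2⟩ := hξ
        rw [hLeq] at h2
        nlinarith
  -- the cutoff density
  set h : ℝ → ℝ := (Ioc t (t + L)).indicator (fun ξ => Real.exp (-c * (ξ - t)) / Z)
    with hh_def
  have hh_nonneg : ∀ ξ, 0 ≤ h ξ := by
    intro ξ
    rw [hh_def]
    apply Set.indicator_nonneg
    intro ξ _
    positivity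
  have hh_zero : ∀ ξ, ξ ∉ Ioc t (t + L) → h ξ = 0 := by
    intro ξ hξ
    rw [hh_def, Set.indicator_of_notMem hξ]
  have hh_meas : Measurable h := by
    rw [hh_def]
    apply Measurable.indicator _ measurableSet_Ioc
    exact ((Real.continuous_exp.comp (by continuity)).measurable).div_const Z
  have hh_int : Integrable h volume := by
    rw [hh_def, integrable_indicator_iff measurableSet_Ioc]
    exact hint.div_const Z
  have hh_integral : (∫ ξ, h ξ) = 1 := by
    rw [hh_def, integral_indicator measurableSet_Ioc, integral_div, ← hZ_def,
      div_self hZpos.ne']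
  -- the cutoff function
  set ψ : ℝ → ℝ := fun ξ => 1 - ∫ s in t..ξ, h s with hψ_def
  have hψ_cont : Continuous ψ :=
    continuous_const.sub (intervalIntegral.continuous_primitive
      (fun a b => hh_int.intervalIntegrable) t)
  have hψ_sub : ∀ a b : ℝ, a ≤ b → ψ a - ψ b = ∫ ξ in Ioc a b, h ξ := by
    intro a b hab
    have := intervalIntegral.integral_interval_sub_left (a := t) (b := b) (c := a)
      hh_int.intervalIntegrable hh_int.intervalIntegrable
    rw [hψ_def]
    dsimp only
    rw [← intervalIntegral.integral_of_le hab, ← this]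
    ring
  have hψ_one : ∀ ξ, ξ ≤ t → ψ ξ = 1 := by
    intro ξ hξ
    have h1 : (∫ s in t..ξ, h s) = -∫ s in Ioc ξ t, h s := by
      rw [← intervalIntegral.integral_of_le hξ, intervalIntegral.integral_symm]
    have h2 : (∫ s in Ioc ξ t, h s) = 0 := by
      rw [setIntegral_congr_fun measurableSet_Ioc (g := fun _ => (0:ℝ))]
      · simp
      · intro s hs
        exact hh_zero s (fun hs' => absurd hs'.1 (not_lt.mpr hs.2))
    rw [hψ_def]
    dsimp only
    rw [h1, h2]
    ring
  have hψ_le_one : ∀ ξ, ψ ξ ≤ 1 := by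
    intro ξ
    rcases le_total ξ t with hξ | hξ
    · exact (hψ_one ξ hξ).le
    · rw [hψ_def]
      dsimp only
      have : 0 ≤ ∫ s in t..ξ, h s := by
        rw [intervalIntegral.integral_of_le hξ]
        exact setIntegral_nonneg measurableSet_Ioc (fun s _ => hh_nonneg s)
      linarith
  have hψ_nonneg : ∀ ξ, 0 ≤ ψ ξ := by
    intro ξ
    rcases le_total ξ t with hξ | hξ
    · rw [hψ_one ξ hξ]; norm_num
    · rw [hψ_def]
      dsimp only
      rw [intervalIntegral.integral_of_le hξ]
      have : (∫ s in Ioc t ξ, h s) ≤ ∫ s, h s :=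
        setIntegral_le_integral hh_int (Filter.Eventually.of_forall hh_nonneg)
      rw [hh_integral] at this
      linarith
  have hψ_zero : ∀ ξ, t + L ≤ ξ → ψ ξ = 0 := by
    intro ξ hξ
    have hsplit : (∫ s in Ioc t ξ, h s) = (∫ s in Ioc t (t + L), h s) + ∫ s in Ioc (t + L) ξ, h s := by
      rw [← setIntegral_union (Ioc_disjoint_Ioc_of_le le_rfl) measurableSet_Ioc
        (hh_int.integrableOn) (hh_int.integrableOn), Ioc_union_Ioc_eq_Ioc (by linarith) hξ]
    have h1 : (∫ s in Ioc (t + L) ξ, h s) = 0 := by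
      rw [setIntegral_congr_fun measurableSet_Ioc (g := fun _ => (0:ℝ))]
      · simp
      · intro s hs
        exact hh_zero s (fun hs' => absurd hs'.2 (not_le.mpr hs.1))
    have h2 : (∫ s in Ioc t (t + L), h s) = 1 := by
      have : (∫ s, h s) = ∫ s in Ioc t (t + L), h s := by
        rw [hh_def, integral_indicator measurableSet_Ioc,
          setIntegral_indicator measurableSet_Ioc, Set.inter_self]
      rw [← this, hh_integral]
    rw [hψ_def]
    dsimp only
    rw [intervalIntegral.integral_of_le (by linarith : t ≤ ξ), hsplit, h1, h2]
    ring
  have hwge : ∀ ξ, τ ≤ ξ → w ξ = T ξ τ u := by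
    intro ξ hξ
    rw [hw τ ξ hξ, hwτ]
  -- the trial solution and inhomogeneity
  set x : ℝ → X := fun ξ => ψ ξ • w ξ with hx_def
  set y : ℝ → X := fun ξ => -(h ξ • w ξ) with hy_def
  have hxτ : x τ = u := by
    rw [hx_def]
    dsimp only
    rw [hψ_one τ htτ, hwτ, one_smul]
  have hsolves : SolvesEq T x y := by
    intro a b hab
    have hTx : T b a (x a) = ψ a • w b := by
      rw [hx_def]
      dsimp only
      rw [ContinuousLinearMap.map_smul, ← hw a b hab]
    have hInt : (∫ ξ in Ioc a b, T b ξ (y ξ)) = (-(∫ ξ in Ioc a b, h ξ)) • w b := by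
      have heq : EqOn (fun ξ => T b ξ (y ξ)) (fun ξ => (-h ξ) • w b) (Ioc a b) := by
        intro ξ hξ
        dsimp only
        rw [hy_def]
        dsimp only
        rw [map_neg, ContinuousLinearMap.map_smul, ← hw ξ b hξ.2, neg_smul, ← neg_smul]
      rw [setIntegral_congr_fun measurableSet_Ioc heq, integral_smul_const, integral_neg]
    rw [hTx, hInt, ← add_smul]
    have hsum : ψ a + -(∫ ξ in Ioc a b, h ξ) = ψ b := by
      have := hψ_sub a b hab
      linarith
    rw [hsum]
  -- uniform bound on `x`
  set M₂ : ℝ := K * Real.exp (|c| * (t + L - τ)) * N τ u with hM2_def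
  have hM2_nonneg : 0 ≤ M₂ :=
    mul_nonneg (mul_nonneg hK.le (Real.exp_pos _).le) (hN0 τ u)
  have hwbd : ∀ ξ, τ ≤ ξ → ξ ≤ t + L → N ξ (w ξ) ≤ M₂ := by
    intro ξ hξ1 hξ2
    rw [hwge ξ hξ1]
    refine (hBd τ ξ u hξ1).trans ?_
    rw [hM2_def]
    have hexp : Real.exp (c * (ξ - τ)) ≤ Real.exp (|c| * (t + L - τ)) := by
      apply Real.exp_le_exp.2
      nlinarith [mul_nonneg (sub_nonneg.2 (le_abs_self c)) (sub_nonneg.2 hξ1),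
        mul_nonneg (abs_nonneg c) (sub_nonneg.2 hξ2)]
    exact mul_le_mul_of_nonneg_right (mul_le_mul_of_nonneg_left hexp hK.le) (hN0 τ u)
  have hxzero : ∀ ξ, t + L ≤ ξ → x ξ = 0 := by
    intro ξ hξ
    rw [hx_def]
    dsimp only
    rw [hψ_zero ξ hξ, zero_smul]
  have hNx : ∀ ξ, N ξ (x ξ) = ψ ξ * N ξ (w ξ) := by
    intro ξ
    rw [hx_def]
    dsimp only
    rw [hNsmul, abs_of_nonneg (hψ_nonneg ξ)]
  have hxbM : ∀ ξ, N ξ (x ξ) ≤ max M M₂ := by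
    intro ξ
    by_cases hξL : ξ ≤ t + L
    · rw [hNx]
      rcases le_total ξ τ with hξτ | hξτ
      · have hwφ : N ξ (w ξ) ≤ M := by
          rw [hw_def]
          dsimp only
          rw [if_pos hξτ]
          exact hM ξ hξτ
        calc ψ ξ * N ξ (w ξ) ≤ 1 * N ξ (w ξ) :=
              mul_le_mul_of_nonneg_right (hψ_le_one ξ) (hN0 _ _)
          _ = N ξ (w ξ) := one_mul _
          _ ≤ max M M₂ := hwφ.trans (le_max_left _ _)
      · calc ψ ξ * N ξ (w ξ) ≤ 1 * N ξ (w ξ) :=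
              mul_le_mul_of_nonneg_right (hψ_le_one ξ) (hN0 _ _)
          _ = N ξ (w ξ) := one_mul _
          _ ≤ max M M₂ := (hwbd ξ hξτ hξL).trans (le_max_right _ _)
    · rw [hxzero ξ (not_le.1 hξL).le, hNzero]
      exact le_trans hM2_nonneg (le_max_right _ _)
  have hτtL : τ ≤ t + L := by linarith
  -- membership in Y₁
  have hY1 : MemY1 N p x := by
    refine ⟨hψ_cont.smul hwcont, ⟨max M M₂, hxbM⟩, ?_⟩
    by_cases hp : p = ∞
    · rw [famLpNorm, if_pos hp]
      refine lt_of_le_of_lt (essSup_le_of_ae_le _ (Filter.Eventually.of_forall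
        (fun ξ => ENNReal.ofReal_le_ofReal (hxbM ξ)))) ENNReal.ofReal_lt_top
    · have hp0 : p ≠ 0 := (lt_of_lt_of_le zero_lt_one (hq.trans hpq)).ne'
      have hp'pos : 0 < p.toReal := ENNReal.toReal_pos hp0 hp
      rw [famLpNorm, if_neg hp]
      refine ENNReal.rpow_lt_top_of_nonneg (by positivity) ?_
      have hsplit := lintegral_add_compl (μ := volume)
        (fun ξ => ENNReal.ofReal (N ξ (x ξ)) ^ p.toReal) (measurableSet_Iic (a := τ))
      rw [compl_Iic] at hsplit
      have h1 : (∫⁻ ξ in Iic τ, ENNReal.ofReal (N ξ (x ξ)) ^ p.toReal)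
          ≤ (famLpNorm N p (fun s => if s ≤ τ then φ s else 0)) ^ p.toReal := by
        have hmono : (∫⁻ ξ in Iic τ, ENNReal.ofReal (N ξ (x ξ)) ^ p.toReal)
            ≤ ∫⁻ ξ in Iic τ, ENNReal.ofReal
                (N ξ (if ξ ≤ τ then φ ξ else 0)) ^ p.toReal := by
          refine lintegral_mono_ae ((ae_restrict_iff' measurableSet_Iic).2
            (Filter.Eventually.of_forall (fun ξ hξ => ?_)))
          have hle : N ξ (x ξ) ≤ N ξ (if ξ ≤ τ then φ ξ else 0) := by
            rw [if_pos (mem_Iic.1 hξ), hNx]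
            have hwe : w ξ = φ ξ := by
              rw [hw_def]
              dsimp only
              rw [if_pos (mem_Iic.1 hξ)]
            rw [hwe]
            calc ψ ξ * N ξ (φ ξ) ≤ 1 * N ξ (φ ξ) :=
                mul_le_mul_of_nonneg_right (hψ_le_one ξ) (hN0 _ _)
              _ = N ξ (φ ξ) := one_mul _
          exact ENNReal.rpow_le_rpow (ENNReal.ofReal_le_ofReal hle) hp'pos.le
        refine hmono.trans ((setLIntegral_le_lintegral _ _).trans ?_)
        rw [famLpNorm, if_neg hp, ← ENNReal.rpow_mul, one_div,
          inv_mul_cancel₀ hp'pos.ne', ENNReal.rpow_one]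
      have h2 : (∫⁻ ξ in Ioi τ, ENNReal.ofReal (N ξ (x ξ)) ^ p.toReal)
          ≤ ENNReal.ofReal (max M M₂) ^ p.toReal * volume (Ioc τ (t + L)) := by
        have hmono : (∫⁻ ξ in Ioi τ, ENNReal.ofReal (N ξ (x ξ)) ^ p.toReal)
            ≤ ∫⁻ ξ in Ioi τ, (Ioc τ (t + L)).indicator
                (fun _ => ENNReal.ofReal (max M M₂) ^ p.toReal) ξ := by
          refine lintegral_mono_ae ((ae_restrict_iff' measurableSet_Ioi).2
            (Filter.Eventually.of_forall (fun ξ hξ => ?_)))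
          by_cases hξL : ξ ≤ t + L
          · rw [Set.indicator_of_mem (Set.mem_Ioc.2 ⟨mem_Ioi.1 hξ, hξL⟩)]
            exact ENNReal.rpow_le_rpow (ENNReal.ofReal_le_ofReal (hxbM ξ)) hp'pos.le
          · rw [hxzero ξ (not_le.1 hξL).le, hNzero]
            simp [ENNReal.zero_rpow_of_pos hp'pos]
        refine hmono.trans ((setLIntegral_le_lintegral _ _).trans ?_)
        rw [lintegral_indicator measurableSet_Ioc, setLIntegral_const]
      have hsplit' : (∫⁻ ξ, ENNReal.ofReal (N ξ (x ξ)) ^ p.toReal)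
          = (∫⁻ ξ in Iic τ, ENNReal.ofReal (N ξ (x ξ)) ^ p.toReal)
            + ∫⁻ ξ in Ioi τ, ENNReal.ofReal (N ξ (x ξ)) ^ p.toReal := hsplit.symm
      rw [hsplit']
      refine (ENNReal.add_lt_top.2 ⟨lt_of_le_of_lt h1 ?_, lt_of_le_of_lt h2 ?_⟩).ne
      · exact ENNReal.rpow_lt_top_of_nonneg hp'pos.le hφLp.ne
      · exact ENNReal.mul_lt_top (ENNReal.rpow_lt_top_of_nonneg hp'pos.le
          ENNReal.ofReal_ne_top) (by simp [Real.volume_Ioc])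
  -- pointwise bound for `y`
  have hKBZ : ∀ ξ, N ξ (y ξ) ≤ Set.indicator (Ioc t (t + L)) (fun _ => K * B / Z) ξ := by
    intro ξ
    have hNy : N ξ (y ξ) = h ξ * N ξ (w ξ) := by
      rw [hy_def]
      dsimp only
      rw [hNneg, hNsmul, abs_of_nonneg (hh_nonneg ξ)]
    by_cases hξ : ξ ∈ Ioc t (t + L)
    · rw [Set.indicator_of_mem hξ, hNy]
      have hNwξ : N ξ (w ξ) ≤ K * Real.exp (c * (ξ - t)) * B := by
        rw [hw t ξ hξ.1.le, hB_def, ← hwt]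
        exact hBd t ξ (w t) hξ.1.le
      have hhval : h ξ = Real.exp (-c * (ξ - t)) / Z := by
        rw [hh_def, Set.indicator_of_mem hξ]
      calc h ξ * N ξ (w ξ) ≤ h ξ * (K * Real.exp (c * (ξ - t)) * B) :=
            mul_le_mul_of_nonneg_left hNwξ (hh_nonneg ξ)
        _ = K * B / Z := by
            have key : Real.exp (-c * (ξ - t)) * (K * Real.exp (c * (ξ - t)) * B)
                = K * B := by
              rw [show -c * (ξ - t) = -(c * (ξ - t)) by ring, Real.exp_neg]
              field_simp
            rw [hhval, div_mul_eq_mul_div, key]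
    · rw [Set.indicator_of_notMem hξ, hNy, hh_zero ξ hξ, zero_mul]
  have hfinal_nonneg : 0 ≤ 2 * K * Real.exp c * B :=
    mul_nonneg (mul_nonneg (mul_nonneg two_pos.le hK.le) (Real.exp_pos c).le) hB0
  have hKBZ2 : K * B / Z ≤ 2 * K * Real.exp c * B := by
    rw [div_le_iff₀ hZpos]
    nlinarith [mul_le_mul_of_nonneg_left hZkey (mul_nonneg hK.le hB0), hL1,
      mul_nonneg hK.le hB0]
  have hKBZnn : 0 ≤ K * B / Z := div_nonneg (mul_nonneg hK.le hB0) hZpos.le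
  -- the `L^q` bound on `y`
  have hybound : famLpNorm N q y ≤ ENNReal.ofReal (2 * K * Real.exp c * B) := by
    by_cases hqi : q = ∞
    · rw [famLpNorm, if_pos hqi]
      refine essSup_le_of_ae_le _ (Filter.Eventually.of_forall (fun ξ => ?_))
      refine ENNReal.ofReal_le_ofReal ((hKBZ ξ).trans ?_)
      by_cases hξ : ξ ∈ Ioc t (t + L)
      · rw [Set.indicator_of_mem hξ]
        exact hKBZ2
      · rw [Set.indicator_of_notMem hξ]
        exact hfinal_nonneg
    · have hq'1 : 1 ≤ q.toReal := by
        rw [← ENNReal.toReal_one]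
        exact ENNReal.toReal_mono hqi hq
      have hq'pos : 0 < q.toReal := lt_of_lt_of_le zero_lt_one hq'1
      rw [famLpNorm, if_neg hqi]
      have hstep : (∫⁻ ξ, ENNReal.ofReal (N ξ (y ξ)) ^ q.toReal)
          ≤ ENNReal.ofReal (K * B / Z) ^ q.toReal * ENNReal.ofReal L := by
        have hmono : (∫⁻ ξ, ENNReal.ofReal (N ξ (y ξ)) ^ q.toReal)
            ≤ ∫⁻ ξ, (Ioc t (t + L)).indicator
                (fun _ => ENNReal.ofReal (K * B / Z) ^ q.toReal) ξ := by
          refine lintegral_mono (fun ξ => ?_)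
          by_cases hξ : ξ ∈ Ioc t (t + L)
          · rw [Set.indicator_of_mem hξ]
            refine ENNReal.rpow_le_rpow (ENNReal.ofReal_le_ofReal ?_) hq'pos.le
            have h' := hKBZ ξ
            rwa [Set.indicator_of_mem hξ] at h'
          · rw [Set.indicator_of_notMem hξ]
            have h0 : N ξ (y ξ) ≤ 0 := by
              have h' := hKBZ ξ
              rwa [Set.indicator_of_notMem hξ] at h'
            rw [ENNReal.ofReal_eq_zero.2 h0, ENNReal.zero_rpow_of_pos hq'pos]
        refine hmono.trans ?_
        rw [lintegral_indicator measurableSet_Ioc, setLIntegral_const, Real.volume_Ioc,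
          add_sub_cancel_left]
      calc (∫⁻ ξ, ENNReal.ofReal (N ξ (y ξ)) ^ q.toReal) ^ (1 / q.toReal)
          ≤ (ENNReal.ofReal (K * B / Z) ^ q.toReal * ENNReal.ofReal L) ^ (1 / q.toReal) :=
            ENNReal.rpow_le_rpow hstep (by positivity)
        _ = ENNReal.ofReal (K * B / Z) * ENNReal.ofReal L ^ (1 / q.toReal) := by
            rw [ENNReal.mul_rpow_of_nonneg _ _ (by positivity), ← ENNReal.rpow_mul,
              mul_one_div_cancel hq'pos.ne', ENNReal.rpow_one]
        _ ≤ ENNReal.ofReal (K * B / Z) * ENNReal.ofReal L ^ (1 : ℝ) := by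
            refine mul_le_mul_right (ENNReal.rpow_le_rpow_of_exponent_le
              (ENNReal.one_le_ofReal.2 hL1) ?_) _
            rw [div_le_one hq'pos]
            exact hq'1
        _ = ENNReal.ofReal (K * B / Z * L) := by
            rw [ENNReal.rpow_one, ← ENNReal.ofReal_mul hKBZnn]
        _ ≤ ENNReal.ofReal (2 * K * Real.exp c * B) := by
            refine ENNReal.ofReal_le_ofReal ?_
            rw [div_mul_eq_mul_div, div_le_iff₀ hZpos]
            nlinarith [mul_le_mul_of_nonneg_left hZkey (mul_nonneg hK.le hB0)]
  have hY2 : MemY2 N q y := by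
    refine ⟨?_, lt_of_le_of_lt hybound ENNReal.ofReal_lt_top⟩
    exact (AEStronglyMeasurable.smul hh_meas.aestronglyMeasurable
      hwcont.aestronglyMeasurable).neg
  -- apply the admissibility bound
  have happ := hG x y hY1 hY2 hsolves τ
  rw [hxτ] at happ
  have htR : (famLpNorm N q y).toReal ≤ 2 * K * Real.exp c * B := by
    have h' := ENNReal.toReal_mono ENNReal.ofReal_ne_top hybound
    rwa [ENNReal.toReal_ofReal hfinal_nonneg] at h'
  rcases le_or_gt 0 normG with hnG | hnG
  · calc N τ u ≤ normG * (famLpNorm N q y).toReal := happ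
      _ ≤ normG * (2 * K * Real.exp c * B) := mul_le_mul_of_nonneg_left htR hnG
      _ = 2 * K * Real.exp c * normG * N t (T t τ u) := by
          rw [hB_def]
          ring
  · have htR0 : 0 ≤ (famLpNorm N q y).toReal := ENNReal.toReal_nonneg
    have hnn := mul_nonneg (neg_nonneg.2 hnG.le) htR0
    have hle0 : N τ u ≤ 0 := by nlinarith [happ]
    have hu0 : u = 0 := norm_le_zero_iff.1 ((hN₁ τ u).trans hle0)
    subst hu0
    have hBzero : B = 0 := by rw [hB_def, map_zero, hNzero]
    simp [hNzero, hBzero]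
end
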